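/- arXiv:1301.2469 — 5 statements merged into one kernel-verified Lean document; each statement's English description precedes it below -/
import Mathlib

section
/- Let {Γ_n} be a sequence of real numbers such that there exists a subsequence {Γ_{n_k}} with Γ_{n_k} < Γ_{n_k + 1} for all k. For n ≥ n_0 define τ(n) = max{k ≤ n : Γ_k < Γ_{k+1}}. Then τ is a nondecreasing function of n with τ(n) → ∞, and for all n ≥ n_0 one has Γ_{τ(n)} ≤ Γ_{τ(n)+1} and Γ_n ≤ Γ_{τ(n)+1}. -/
theorem stmt_1 (Γ : ℕ → ℝ) (n₀ : ℕ) (τ : ℕ → ℕ)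
    (hsub : ∃ φ : ℕ → ℕ, StrictMono φ ∧ ∀ k, Γ (φ k) < Γ (φ k + 1))
    (hτ : ∀ n ≥ n₀, τ n ≤ n ∧ Γ (τ n) < Γ (τ n + 1) ∧
      ∀ k ≤ n, Γ k < Γ (k + 1) → k ≤ τ n) :
    (∀ m n, n₀ ≤ m → m ≤ n → τ m ≤ τ n) ∧
    Filter.Tendsto τ Filter.atTop Filter.atTop ∧
    (∀ n ≥ n₀, Γ (τ n) ≤ Γ (τ n + 1) ∧ Γ n ≤ Γ (τ n + 1)) := by
  obtain ⟨φ, hφmono, hφ⟩ := hsub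
  have hmono : ∀ m n, n₀ ≤ m → m ≤ n → τ m ≤ τ n := by
    intro m n hm hmn
    obtain ⟨hm1, hm2, _⟩ := hτ m hm
    obtain ⟨_, _, hn3⟩ := hτ n (hm.trans hmn)
    exact hn3 (τ m) (hm1.trans hmn) hm2
  refine ⟨hmono, ?_, ?_⟩
  · rw [Filter.tendsto_atTop]
    intro N
    rw [Filter.eventually_atTop]
    refine ⟨max n₀ (φ N), fun n hn => ?_⟩
    obtain ⟨_, _, hn3⟩ := hτ n (le_trans (le_max_left _ _) hn)
    have : φ N ≤ τ n := hn3 (φ N) (le_trans (le_max_right _ _) hn) (hφ N)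
    exact le_trans (hφmono.le_apply) this
  · intro n hn
    obtain ⟨h1, h2, h3⟩ := hτ n hn
    refine ⟨h2.le, ?_⟩
    have aux : ∀ j, τ n + 1 ≤ j → j ≤ n → Γ j ≤ Γ (τ n + 1) := by
      intro j
      induction j with
      | zero => intro h _; omega
      | succ j ih =>
        intro hj hjn
        rcases Nat.lt_or_ge (τ n + 1) (j + 1) with h | h
        · have hj' : τ n + 1 ≤ j := by omega
          have : ¬ Γ j < Γ (j + 1) := fun hc => by
            have := h3 j (by omega) hc; omega
          exact le_trans (not_lt.mp this) (ih hj' (by omega))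
        · have : j + 1 = τ n + 1 := by omega
          rw [this]
    rcases Nat.lt_or_ge (τ n) n with h | h
    · exact aux n (by omega) le_rfl
    · have : τ n = n := le_antisymm h1 h
      simpa [this] using h2.le
end

section
/- Let C be a closed convex subset of a real Hilbert space, T : C → C a λ-strict pseudocontraction, p ∈ F(T), and define x_{n+1} = β_n u + γ_n x_n + (1 − β_n − γ_n) T_{α_n} x_n with T_α = (1−α)I + αT, α_n ∈ [0, 2λ], β_n, γ_n ∈ (0,1), β_n + γ_n ≤ 1. Then α_n(1 − β_n − γ_n)(2λ − α_n)‖x_n − T x_n‖² ≤ ‖x_n − p‖² − ‖x_{n+1} − p‖² + β_n ‖u − p‖². -/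
set_option maxHeartbeats 1000000 in
lemma expand3 {H : Type*} [NormedAddCommGroup H] [InnerProductSpace ℝ H]
    (a b c : ℝ) (u v w : H) :
    ‖a•u+b•v+c•w‖^2 = a^2*‖u‖^2 + b^2*‖v‖^2 + c^2*‖w‖^2
      + 2*a*b*(inner ℝ u v : ℝ) + 2*a*c*(inner ℝ u w : ℝ) + 2*b*c*(inner ℝ v w : ℝ) := by
  rw [← real_inner_self_eq_norm_sq, ← real_inner_self_eq_norm_sq,
    ← real_inner_self_eq_norm_sq, ← real_inner_self_eq_norm_sq]
  simp [inner_add_add_self, inner_add_left, inner_add_right, real_inner_smul_left,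
    real_inner_smul_right, real_inner_comm v u, real_inner_comm w u, real_inner_comm w v, -inner_self_eq_norm_sq_to_K]
  ring

lemma convex3 {H : Type*} [NormedAddCommGroup H] [InnerProductSpace ℝ H]
    (a b c : ℝ) (ha : 0 ≤ a) (hb : 0 ≤ b) (hc : 0 ≤ c) (h : a+b+c=1) (u v w : H) :
    ‖a•u+b•v+c•w‖^2 ≤ a*‖u‖^2+b*‖v‖^2+c*‖w‖^2 := by
  rw [expand3]
  have h1 : 2*(inner ℝ u v : ℝ) ≤ ‖u‖^2 + ‖v‖^2 := by
    nlinarith [real_inner_le_norm u v, norm_nonneg u, norm_nonneg v, sq_nonneg (‖u‖-‖v‖)]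
  have h2 : 2*(inner ℝ u w : ℝ) ≤ ‖u‖^2 + ‖w‖^2 := by
    nlinarith [real_inner_le_norm u w, sq_nonneg (‖u‖-‖w‖)]
  have h3 : 2*(inner ℝ v w : ℝ) ≤ ‖v‖^2 + ‖w‖^2 := by
    nlinarith [real_inner_le_norm v w, sq_nonneg (‖v‖-‖w‖)]
  have hc' : c = 1 - a - b := by linarith
  subst hc'
  nlinarith [mul_le_mul_of_nonneg_left h1 (mul_nonneg ha hb),
    mul_le_mul_of_nonneg_left h2 (mul_nonneg ha hc),
    mul_le_mul_of_nonneg_left h3 (mul_nonneg hb hc),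
    sq_nonneg (‖u‖), sq_nonneg (‖v‖), sq_nonneg (‖w‖)]

theorem stmt_8 {H : Type*} [NormedAddCommGroup H] [InnerProductSpace ℝ H]
    (C : Set H) (hCc : IsClosed C) (hCv : Convex ℝ C)
    (T : H → H) (hTC : ∀ x ∈ C, T x ∈ C) (lam : ℝ) (hlam : lam ∈ Set.Ioo (0:ℝ) 1)
    (hT : ∀ x ∈ C, ∀ y ∈ C,
      (inner ℝ (T x - T y) (x - y) : ℝ) ≤ ‖x - y‖ ^ 2 - lam * ‖(x - y) - (T x - T y)‖ ^ 2)
    (p : H) (hp : p ∈ C) (hfix : T p = p) (u : H) (hu : u ∈ C)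
    (α β γ : ℕ → ℝ)
    (hα : ∀ n, α n ∈ Set.Icc (0:ℝ) (2 * lam))
    (hβ : ∀ n, β n ∈ Set.Ioo (0:ℝ) 1) (hγ : ∀ n, γ n ∈ Set.Ioo (0:ℝ) 1)
    (hβγ : ∀ n, β n + γ n ≤ 1)
    (x : ℕ → H) (hxC : ∀ n, x n ∈ C)
    (hrec : ∀ n, x (n + 1) =
      β n • u + γ n • x n + (1 - β n - γ n) • ((1 - α n) • x n + α n • T (x n))) :
    ∀ n, α n * (1 - β n - γ n) * (2 * lam - α n) * ‖x n - T (x n)‖ ^ 2 ≤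
      ‖x n - p‖ ^ 2 - ‖x (n + 1) - p‖ ^ 2 + β n * ‖u - p‖ ^ 2 := by
  intro n
  set a := α n
  set b := β n
  set g := γ n
  have hb' := hβ n; have hg' := hγ n; have ha' := hα n; have hbg := hβγ n
  -- key estimate
  set y := x n - p with hy
  set z := T (x n) - p with hz
  have hTn := hT (x n) (hxC n) p hp
  rw [hfix] at hTn
  have hyz : y - z = x n - T (x n) := by rw [hy, hz]; abel
  -- T_α x − p = y − a • (y − z)
  have key : ‖(1 - a) • x n + a • T (x n) - p‖^2 ≤ ‖y‖^2 - a*(2*lam - a)*‖y - z‖^2 := by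
    have he : (1 - a) • x n + a • T (x n) - p = y - a • (y - z) := by
      simp [hy, hz]; module
    rw [he]
    have hexp : ‖y - a • (y - z)‖^2 = ‖y‖^2 - 2*a*(inner ℝ y (y-z) : ℝ) + a^2*‖y-z‖^2 := by
      rw [← real_inner_self_eq_norm_sq, ← real_inner_self_eq_norm_sq,
        ← real_inner_self_eq_norm_sq]
      simp [inner_sub_left, inner_sub_right, real_inner_smul_left, real_inner_smul_right,
        real_inner_comm (y - z) y, -inner_self_eq_norm_sq_to_K]
      ring
    have hin : lam * ‖y - z‖^2 ≤ (inner ℝ y (y-z) : ℝ) := by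
      have : (inner ℝ y (y-z) : ℝ) = ‖y‖^2 - (inner ℝ z y : ℝ) := by
        rw [inner_sub_right, real_inner_self_eq_norm_sq, real_inner_comm]
      have h2 : (inner ℝ z y : ℝ) ≤ ‖y‖^2 - lam * ‖y - z‖^2 := by
        rw [hy, hz]; exact hTn
      linarith
    have ha0 : 0 ≤ a := ha'.1
    nlinarith [hexp, mul_le_mul_of_nonneg_left hin ha0]
  -- convexity
  have hsum : b + g + (1 - b - g) = 1 := by ring
  have hconv := convex3 b g (1 - b - g) (le_of_lt hb'.1) (le_of_lt hg'.1)
    (by linarith) hsum (u - p) y ((1 - a) • x n + a • T (x n) - p)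
  have heq : x (n+1) - p = b • (u - p) + g • y
      + (1 - b - g) • ((1 - a) • x n + a • T (x n) - p) := by
    rw [hrec n, hy]; module
  rw [← heq] at hconv
  rw [← hyz]
  have h1bg : 0 ≤ 1 - b - g := by linarith
  nlinarith [mul_le_mul_of_nonneg_left key h1bg,
    mul_nonneg hb'.1.le (sq_nonneg ‖y‖)]
end

section
/- Let C be a closed convex subset of a real Hilbert space and T : C → C a λ-strict pseudocontraction with F(T) ≠ ∅. Let u, x_0 ∈ C and x_{n+1} = β_n u + γ_n x_n + (1 − β_n − γ_n)[α_n T x_n + (1 − α_n) x_n], where α_n ∈ [0, 2λ] with liminf α_n(2λ − α_n) > 0, β_n → 0 with ∑ β_n = ∞, and limsup γ_n < 1 (all in (0,1) with β_n + γ_n ≤ 1). Then {x_n} converges strongly to a fixed point of T. -/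
open Filter Topology RealInnerProductSpace

section WeakCompact


variable {H : Type*} [NormedAddCommGroup H] [InnerProductSpace ℝ H] [CompleteSpace H]

theorem weak_subseq_aux (v : ℕ → H) (M : ℝ) (hM : ∀ k, ‖v k‖ ≤ M) :
    ∃ w : H, ∃ σ : ℕ → ℕ, StrictMono σ ∧
      ∀ y : H, Tendsto (fun k => (⟪v (σ k), y⟫)) atTop (𝓝 ⟪w, y⟫) := by
  have hM0 : 0 ≤ M := le_trans (norm_nonneg _) (hM 0)
  have hcomp : IsCompact (Set.univ.pi (fun _ : ℕ => Set.Icc (-(M*M)) (M*M))) :=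
    isCompact_univ_pi (fun _ => isCompact_Icc)
  have hmem : ∀ k, (fun j => ⟪v k, v j⟫) ∈ Set.univ.pi (fun _ : ℕ => Set.Icc (-(M*M)) (M*M)) := by
    intro k
    rw [Set.mem_univ_pi]
    intro j
    have h1 : |⟪v k, v j⟫| ≤ M * M :=
      (abs_real_inner_le_norm (v k) (v j)).trans
        (mul_le_mul (hM k) (hM j) (norm_nonneg _) hM0)
    exact ⟨neg_le_of_abs_le h1, le_of_abs_le h1⟩
  obtain ⟨g, -, σ, hσ, hg⟩ := hcomp.isSeqCompact hmem
  rw [tendsto_pi_nhds] at hg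
  have hgj : ∀ j, Tendsto (fun k => ⟪v (σ k), v j⟫) atTop (𝓝 (g j)) := fun j => hg j
  -- the set of y for which the limit exists, as a submodule
  set A : Submodule ℝ H :=
    { carrier := {y : H | ∃ L : ℝ, Tendsto (fun k => ⟪v (σ k), y⟫) atTop (𝓝 L)}
      add_mem' := by
        rintro a b ⟨La, ha⟩ ⟨Lb, hb⟩
        exact ⟨La + Lb, by simpa [inner_add_right] using ha.add hb⟩
      zero_mem' := ⟨0, by simpa using (tendsto_const_nhds : Tendsto (fun _ : ℕ => (0:ℝ)) atTop (𝓝 0))⟩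
      smul_mem' := by
        rintro c a ⟨L, hL⟩
        exact ⟨c * L, by simpa [real_inner_smul_right] using hL.const_mul c⟩ } with hA
  have hAclosed : IsClosed (A : Set H) := by
    refine isClosed_of_closure_subset ?_
    intro y hy
    have hc : CauchySeq (fun k => ⟪v (σ k), y⟫) := by
      rw [Metric.cauchySeq_iff]
      intro ε hε
      obtain ⟨y', hy'A, hy'⟩ := Metric.mem_closure_iff.mp hy (ε / (4 * (M + 1))) (by positivity)
      obtain ⟨L, hL⟩ := hy'A
      have hC : CauchySeq (fun k => ⟪v (σ k), y'⟫) := hL.cauchySeq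
      rw [Metric.cauchySeq_iff] at hC
      obtain ⟨N, hN⟩ := hC (ε/2) (by positivity)
      refine ⟨N, fun m hm n hn => ?_⟩
      have key : ∀ k, |⟪v (σ k), y⟫ - ⟪v (σ k), y'⟫| ≤ M * (ε / (4*(M+1))) := by
        intro k
        rw [← inner_sub_right]
        refine (abs_real_inner_le_norm _ _).trans ?_
        have hd : ‖y - y'‖ ≤ ε / (4*(M+1)) := by
          rw [dist_eq_norm] at hy'
          exact le_of_lt hy'
        exact mul_le_mul (hM _) hd (norm_nonneg _) hM0
      have h1 := key m
      have h2 := key n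
      have h3 := hN m hm n hn
      rw [Real.dist_eq] at h3 ⊢
      have hMe : M * (ε / (4*(M+1))) ≤ ε/4 := by
        have h4 : (0:ℝ) < M + 1 := by linarith
        calc M * (ε / (4*(M+1))) = M * ε / (4*(M+1)) := by ring
          _ ≤ ε/4 := by
              rw [div_le_div_iff₀ (by positivity) (by norm_num)]
              nlinarith
      have := abs_sub_abs_le_abs_sub (⟪v (σ m), y⟫) (⟪v (σ n), y⟫)
      calc |⟪v (σ m), y⟫ - ⟪v (σ n), y⟫|
          ≤ |⟪v (σ m), y⟫ - ⟪v (σ m), y'⟫| + |⟪v (σ m), y'⟫ - ⟪v (σ n), y'⟫|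
            + |⟪v (σ n), y'⟫ - ⟪v (σ n), y⟫| := by
            have := abs_sub_le (⟪v (σ m), y⟫) (⟪v (σ m), y'⟫) (⟪v (σ n), y⟫)
            have h4 := abs_sub_le (⟪v (σ m), y'⟫) (⟪v (σ n), y'⟫) (⟪v (σ n), y⟫)
            linarith
        _ < ε := by
            have h5 : |⟪v (σ n), y'⟫ - ⟪v (σ n), y⟫| ≤ M * (ε / (4*(M+1))) := by
              rw [abs_sub_comm]; exact h2
            linarith
    obtain ⟨L, hL⟩ := cauchySeq_tendsto_of_complete hc
    exact ⟨L, hL⟩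
  set W := Submodule.span ℝ (Set.range v) with hW
  have hWA : W ≤ A := Submodule.span_le.mpr (by rintro _ ⟨j, rfl⟩; exact ⟨g j, hgj j⟩)
  have hKA : W.topologicalClosure ≤ A := W.topologicalClosure_minimal hWA hAclosed
  have : CompleteSpace W.topologicalClosure :=
    W.isClosed_topologicalClosure.completeSpace_coe
  have hsup : W.topologicalClosure ⊔ W.topologicalClosureᗮ = ⊤ :=
    Submodule.sup_orthogonal_of_hasOrthogonalProjection
  have hK'A : W.topologicalClosureᗮ ≤ A := by
    intro y hy
    have hz : ∀ k, ⟪v (σ k), y⟫ = 0 := by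
      intro k
      have hvk : v (σ k) ∈ W.topologicalClosure :=
        W.le_topologicalClosure (Submodule.subset_span ⟨σ k, rfl⟩)
      exact Submodule.inner_right_of_mem_orthogonal hvk hy
    exact ⟨0, by simp only [hz]; exact tendsto_const_nhds⟩
  have hAtop : A = ⊤ := by
    rw [eq_top_iff, ← hsup]
    exact sup_le hKA hK'A
  have hall : ∀ y : H, ∃ L, Tendsto (fun k => ⟪v (σ k), y⟫) atTop (𝓝 L) := by
    intro y
    have : y ∈ A := by rw [hAtop]; trivial
    exact this
  choose L hL using hall
  have Ladd : ∀ a b, L (a+b) = L a + L b := fun a b =>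
    tendsto_nhds_unique (hL (a+b)) (by simpa [inner_add_right] using (hL a).add (hL b))
  have Lsmul : ∀ (c : ℝ) a, L (c • a) = c * L a := fun c a =>
    tendsto_nhds_unique (hL (c • a)) (by simpa [real_inner_smul_right] using (hL a).const_mul c)
  have Lbd : ∀ y, |L y| ≤ M * ‖y‖ := by
    intro y
    refine le_of_tendsto (hL y).abs (Eventually.of_forall fun k => ?_)
    exact (abs_real_inner_le_norm _ _).trans (mul_le_mul_of_nonneg_right (hM _) (norm_nonneg _))
  let f : H →ₗ[ℝ] ℝ := { toFun := L, map_add' := Ladd, map_smul' := Lsmul }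
  let F : H →L[ℝ] ℝ := f.mkContinuous M (fun y => by rw [Real.norm_eq_abs]; exact Lbd y)
  refine ⟨(InnerProductSpace.toDual ℝ H).symm F, σ, hσ, fun y => ?_⟩
  have h1 : ⟪(InnerProductSpace.toDual ℝ H).symm F, y⟫ = F y :=
    InnerProductSpace.toDual_symm_apply
  rw [h1]
  exact hL y

end WeakCompact

section Seq


private lemma tendsto_of_nonneg_of_eventually_le (s : ℕ → ℝ) (hs : ∀ n, 0 ≤ s n)
    (h : ∀ ε > (0:ℝ), ∀ᶠ n in atTop, s n ≤ ε) : Tendsto s atTop (𝓝 0) := by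
  rw [Metric.tendsto_atTop]
  intro ε hε
  obtain ⟨N, hN⟩ := eventually_atTop.mp (h (ε/2) (by linarith))
  refine ⟨N, fun n hn => ?_⟩
  rw [Real.dist_eq]
  have h1 := hs n
  have h2 := hN n hn
  rw [abs_sub_comm, abs_of_nonpos (by linarith)]
  linarith

theorem xu_lemma (s b c : ℕ → ℝ) (hs : ∀ n, 0 ≤ s n) (hb : ∀ n, b n ∈ Set.Ioo (0:ℝ) 1)
    (hrec : ∀ n, s (n+1) ≤ (1 - b n) * s n + b n * c n)
    (hbsum : Tendsto (fun n => ∑ i ∈ Finset.range n, b i) atTop atTop)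
    (hc : ∀ ε > (0:ℝ), ∀ᶠ n in atTop, c n ≤ ε) :
    Tendsto s atTop (𝓝 0) := by
  refine tendsto_of_nonneg_of_eventually_le s hs (fun ε hε => ?_)
  obtain ⟨N, hN⟩ := eventually_atTop.mp (hc (ε/2) (by linarith))
  have claim : ∀ n, N ≤ n → s n ≤ ε/2 + Real.exp (-(∑ i ∈ Finset.Ico N n, b i)) * s N := by
    intro n hn
    induction n, hn using Nat.le_induction with
    | base => simp; linarith
    | succ n hn ih =>
      have hbn := hb n
      have h1 : s (n+1) ≤ (1 - b n) * s n + b n * (ε/2) := by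
        have := hrec n
        have h2 := hN n hn
        nlinarith [hbn.1]
      have h3 : (1 - b n) * s n ≤ (1 - b n) * (ε/2 + Real.exp (-(∑ i ∈ Finset.Ico N n, b i)) * s N) :=
        mul_le_mul_of_nonneg_left ih (by linarith [hbn.2])
      have h4 : (1 - b n) ≤ Real.exp (-(b n)) := by
        have := Real.add_one_le_exp (-(b n)); linarith
      have h5 : ∑ i ∈ Finset.Ico N (n+1), b i = (∑ i ∈ Finset.Ico N n, b i) + b n :=
        Finset.sum_Ico_succ_top hn _
      have h6 : Real.exp (-(∑ i ∈ Finset.Ico N (n+1), b i))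
          = Real.exp (-(b n)) * Real.exp (-(∑ i ∈ Finset.Ico N n, b i)) := by
        rw [h5, ← Real.exp_add]; ring_nf
      have h7 : (1 - b n) * (Real.exp (-(∑ i ∈ Finset.Ico N n, b i)) * s N)
          ≤ Real.exp (-(∑ i ∈ Finset.Ico N (n+1), b i)) * s N := by
        rw [h6]
        have hE : 0 ≤ Real.exp (-(∑ i ∈ Finset.Ico N n, b i)) * s N :=
          mul_nonneg (Real.exp_pos _).le (hs N)
        calc (1 - b n) * (Real.exp (-(∑ i ∈ Finset.Ico N n, b i)) * s N)
            ≤ Real.exp (-(b n)) * (Real.exp (-(∑ i ∈ Finset.Ico N n, b i)) * s N) :=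
              mul_le_mul_of_nonneg_right h4 hE
          _ = Real.exp (-(b n)) * Real.exp (-(∑ i ∈ Finset.Ico N n, b i)) * s N := by ring
      nlinarith [hbn.1, hbn.2]
  -- the exponential term tends to 0
  have hsum' : Tendsto (fun n => ∑ i ∈ Finset.Ico N n, b i) atTop atTop := by
    refine Tendsto.congr' ?_ (tendsto_atTop_add_const_right atTop (-(∑ i ∈ Finset.range N, b i)) hbsum)
    filter_upwards [eventually_ge_atTop N] with n hn
    rw [Finset.sum_Ico_eq_sub _ hn]
    ring
  have hexp : Tendsto (fun n => Real.exp (-(∑ i ∈ Finset.Ico N n, b i)) * s N) atTop (𝓝 0) := by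
    have h0 : Tendsto (fun n => Real.exp (-(∑ i ∈ Finset.Ico N n, b i))) atTop (𝓝 0) :=
      Real.tendsto_exp_neg_atTop_nhds_zero.comp hsum'
    simpa using h0.mul_const (s N)
  have : ∀ᶠ n in atTop, Real.exp (-(∑ i ∈ Finset.Ico N n, b i)) * s N ≤ ε/2 := by
    have := hexp.eventually (eventually_le_nhds (show (0:ℝ) < ε/2 by linarith))
    exact this
  filter_upwards [this, eventually_ge_atTop N] with n h1 h2
  linarith [claim n h2]

theorem main_seq_lemma (s b e c : ℕ → ℝ) (K : ℝ)
    (hs : ∀ n, 0 ≤ s n) (he : ∀ n, 0 ≤ e n)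
    (hb : ∀ n, b n ∈ Set.Ioo (0:ℝ) 1)
    (hb0 : Tendsto b atTop (𝓝 0))
    (hbsum : Tendsto (fun n => ∑ i ∈ Finset.range n, b i) atTop atTop)
    (hrec1 : ∀ n, s (n+1) ≤ (1 - b n) * s n + b n * c n)
    (hrec2 : ∀ᶠ n in atTop, s (n+1) ≤ s n + b n * K - e n)
    (hcl : ∀ φ : ℕ → ℕ, Tendsto φ atTop atTop → Tendsto (fun k => e (φ k)) atTop (𝓝 0) →
        ∀ ε > (0:ℝ), ∀ᶠ k in atTop, c (φ k) ≤ ε) :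
    Tendsto s atTop (𝓝 0) := by
  obtain ⟨n₀, hn₀⟩ := eventually_atTop.mp hrec2
  by_cases hcase : ∃ N, ∀ n ≥ N, s (n+1) ≤ s n
  · -- Case A : eventually nonincreasing
    obtain ⟨N, hN⟩ := hcase
    have hanti : Antitone (fun k => s (N + k)) := by
      refine antitone_nat_of_succ_le (fun k => ?_)
      exact hN (N + k) (Nat.le_add_right _ _)
    have hbdd : BddBelow (Set.range (fun k => s (N + k))) :=
      ⟨0, by rintro _ ⟨k, rfl⟩; exact hs _⟩
    have hlim : Tendsto (fun k => s (N + k)) atTop (𝓝 (⨅ k, s (N + k))) :=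
      tendsto_atTop_ciInf hanti hbdd
    set l := ⨅ k, s (N + k) with hl
    have hslim : Tendsto s atTop (𝓝 l) := by
      have hcomp : Tendsto (fun n => s (N + (n - N))) atTop (𝓝 l) :=
        hlim.comp (tendsto_sub_atTop_nat N)
      refine Tendsto.congr' ?_ hcomp
      filter_upwards [eventually_ge_atTop N] with n hn
      congr 1
      omega
    have hdiff : Tendsto (fun n => s n - s (n+1)) atTop (𝓝 0) := by
      have h2 : Tendsto (fun n => s (n+1)) atTop (𝓝 l) :=
        hslim.comp (tendsto_add_atTop_nat 1)
      simpa using hslim.sub h2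
    have he0 : Tendsto e atTop (𝓝 0) := by
      refine squeeze_zero' (g := fun n => s n - s (n+1) + b n * K) (Eventually.of_forall he) ?_ ?_
      · filter_upwards [eventually_ge_atTop n₀] with n hn
        have := hn₀ n hn
        linarith
      · have := hdiff.add (by simpa using hb0.mul_const K)
        simpa using this
    exact xu_lemma s b c hs hb hrec1 hbsum (hcl id tendsto_id (by simpa using he0))
  · -- Case B : Maingé argument
    push_neg at hcase
    obtain ⟨n₁, hn₁ge, hn₁⟩ : ∃ n₁, n₀ ≤ n₁ ∧ s n₁ < s (n₁ + 1) := by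
      obtain ⟨n₁, h1, h2⟩ := hcase n₀
      exact ⟨n₁, h1, by linarith⟩
    set J : ℕ → Finset ℕ := fun n => (Finset.range (n+1)).filter (fun k => n₀ ≤ k ∧ s k < s (k+1))
      with hJ
    have hJne : ∀ n, n₁ ≤ n → (J n).Nonempty := by
      intro n hn
      exact ⟨n₁, by simp [hJ, Finset.mem_filter, Finset.mem_range]; exact ⟨by omega, hn₁ge, hn₁⟩⟩
    set τ : ℕ → ℕ := fun n => if h : (J n).Nonempty then (J n).max' h else 0 with hτ
    have hτmem : ∀ n, n₁ ≤ n → τ n ∈ J n := by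
      intro n hn
      simp only [hτ, dif_pos (hJne n hn)]
      exact (J n).max'_mem _
    have hτle : ∀ n, n₁ ≤ n → τ n ≤ n := by
      intro n hn
      have := hτmem n hn
      simp only [hJ, Finset.mem_filter, Finset.mem_range] at this
      omega
    have hτ0 : ∀ n, n₁ ≤ n → n₀ ≤ τ n := by
      intro n hn
      have := hτmem n hn
      simp only [hJ, Finset.mem_filter, Finset.mem_range] at this
      exact this.2.1
    have hτinc : ∀ n, n₁ ≤ n → s (τ n) < s (τ n + 1) := by
      intro n hn
      have := hτmem n hn
      simp only [hJ, Finset.mem_filter, Finset.mem_range] at this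
      exact this.2.2
    have hτmax : ∀ n, n₁ ≤ n → ∀ j, τ n < j → j ≤ n → s (j+1) ≤ s j := by
      intro n hn j hj1 hj2
      by_contra hcon
      push_neg at hcon
      have hjJ : j ∈ J n := by
        simp only [hJ, Finset.mem_filter, Finset.mem_range]
        refine ⟨by omega, le_trans (hτ0 n hn) (le_of_lt hj1), hcon⟩
      have : j ≤ τ n := by
        simp only [hτ, dif_pos (hJne n hn)]
        exact (J n).le_max' j hjJ
      omega
    have hchain : ∀ n, n₁ ≤ n → ∀ j, τ n + 1 ≤ j → j ≤ n + 1 → s j ≤ s (τ n + 1) := by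
      intro n hn j hj1 hj2
      induction j, hj1 using Nat.le_induction with
      | base => exact le_rfl
      | succ j hj ih =>
        have h1 : s (j+1) ≤ s j := hτmax n hn j (by omega) (by omega)
        exact le_trans h1 (ih (by omega))
    have hτtop : Tendsto τ atTop atTop := by
      rw [tendsto_atTop]
      intro N'
      obtain ⟨m, hm1, hm2⟩ := hcase (max N' n₀)
      filter_upwards [eventually_ge_atTop (max m n₁)] with n hn
      have hmJ : m ∈ J n := by
        simp only [hJ, Finset.mem_filter, Finset.mem_range]
        refine ⟨by omega, le_trans (le_max_right _ _) hm1, by linarith⟩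
      have : m ≤ τ n := by
        simp only [hτ, dif_pos (hJne n (by omega))]
        exact (J n).le_max' m hmJ
      calc N' ≤ max N' n₀ := le_max_left _ _
        _ ≤ m := hm1
        _ ≤ τ n := this
    have heτ : Tendsto (fun n => e (τ n)) atTop (𝓝 0) := by
      refine squeeze_zero' (g := fun n => b (τ n) * K) (Eventually.of_forall (fun n => he _)) ?_ ?_
      · filter_upwards [eventually_ge_atTop n₁] with n hn
        have h1 := hn₀ (τ n) (hτ0 n hn)
        have h2 := hτinc n hn
        show e (τ n) ≤ b (τ n) * K
        linarith
      · simpa using (hb0.comp hτtop).mul_const K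
    have hcτ := hcl τ hτtop heτ
    refine tendsto_of_nonneg_of_eventually_le s hs (fun ε hε => ?_)
    have hev : ∀ᶠ n in atTop, s (n + 1) ≤ ε := by
      filter_upwards [hcτ ε hε, eventually_ge_atTop n₁] with n h1 h2
      have hsc : s (τ n) ≤ c (τ n) := by
        have hr := hrec1 (τ n)
        have hi := hτinc n h2
        have hbp := (hb (τ n)).1
        nlinarith
      have h3 : s (n + 1) ≤ s (τ n + 1) := hchain n h2 (n+1) (by have := hτle n h2; omega) (by omega)
      have h4 : s (τ n + 1) ≤ (1 - b (τ n)) * s (τ n) + b (τ n) * c (τ n) := hrec1 (τ n)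
      have hbn := hb (τ n)
      have h5 : (1 - b (τ n)) * s (τ n) + b (τ n) * c (τ n) ≤ ε := by
        have hsε : s (τ n) ≤ ε := le_trans hsc h1
        nlinarith [hbn.1, hbn.2]
      linarith
    obtain ⟨N', hN'⟩ := eventually_atTop.mp hev
    filter_upwards [eventually_ge_atTop (N' + 1)] with n hn
    have : n - 1 ≥ N' := by omega
    have h := hN' (n-1) this
    have : n - 1 + 1 = n := by omega
    rwa [this] at h

end Seq


section helpers
variable {H : Type*} [NormedAddCommGroup H] [InnerProductSpace ℝ H]

private lemma norm_combo_identity (a b : H) (t : ℝ) :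
    ‖t • a + (1 - t) • b‖^2 = t * ‖a‖^2 + (1 - t) * ‖b‖^2 - t * (1 - t) * ‖a - b‖^2 := by
  have h1 : ‖t • a + (1 - t) • b‖^2
      = t^2 * ‖a‖^2 + 2 * (t * (1 - t)) * ⟪a, b⟫ + (1 - t)^2 * ‖b‖^2 := by
    rw [norm_add_sq_real, norm_smul, norm_smul, real_inner_smul_left, real_inner_smul_right,
      Real.norm_eq_abs, Real.norm_eq_abs, mul_pow, mul_pow, sq_abs, sq_abs]
    ring
  have h2 : ‖a - b‖^2 = ‖a‖^2 - 2 * ⟪a, b⟫ + ‖b‖^2 := norm_sub_sq_real a b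
  rw [h1, h2]; ring

private lemma norm_sub_smul_sq (w d : H) (a lamv : ℝ) (ha0 : 0 ≤ a)
    (hk : lamv * ‖d‖^2 ≤ ⟪d, w⟫) :
    ‖w - a • d‖^2 ≤ ‖w‖^2 - a*(2*lamv - a)*‖d‖^2 := by
  have hexp : ‖w - a • d‖^2 = ‖w‖^2 - 2*a*⟪d, w⟫ + a^2*‖d‖^2 := by
    rw [norm_sub_sq_real, real_inner_smul_right, norm_smul, Real.norm_eq_abs, mul_pow, sq_abs,
      real_inner_comm w d]
    ring
  nlinarith [mul_le_mul_of_nonneg_left hk ha0]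

private lemma norm_convex3_sq (a b c : H) (p q r : ℝ) (hp : 0 ≤ p) (hq : 0 ≤ q) (hr : 0 ≤ r)
    (h : p + q + r = 1) :
    ‖p • a + q • b + r • c‖^2 ≤ p * ‖a‖^2 + q * ‖b‖^2 + r * ‖c‖^2 := by
  have e1 : ‖p • a + q • b + r • c‖^2
      = p^2*‖a‖^2 + q^2*‖b‖^2 + r^2*‖c‖^2
        + 2*p*q*⟪a,b⟫ + 2*p*r*⟪a,c⟫ + 2*q*r*⟪b,c⟫ := by
    simp only [← real_inner_self_eq_norm_sq, inner_add_left, inner_add_right,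
      real_inner_smul_left, real_inner_smul_right, real_inner_comm a b, real_inner_comm a c,
      real_inner_comm b c]
    ring
  have hab : 2*⟪a,b⟫ ≤ ‖a‖^2 + ‖b‖^2 := by
    have := sq_nonneg ‖a - b‖; rw [norm_sub_sq_real] at this; linarith
  have hac : 2*⟪a,c⟫ ≤ ‖a‖^2 + ‖c‖^2 := by
    have := sq_nonneg ‖a - c‖; rw [norm_sub_sq_real] at this; linarith
  have hbc : 2*⟪b,c⟫ ≤ ‖b‖^2 + ‖c‖^2 := by
    have := sq_nonneg ‖b - c‖; rw [norm_sub_sq_real] at this; linarith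
  nlinarith [mul_le_mul_of_nonneg_left hab (mul_nonneg hp hq),
    mul_le_mul_of_nonneg_left hac (mul_nonneg hp hr),
    mul_le_mul_of_nonneg_left hbc (mul_nonneg hq hr),
    sq_nonneg ‖a‖, sq_nonneg ‖b‖, sq_nonneg ‖c‖]

end helpers

set_option maxHeartbeats 2000000 in
theorem stmt_9 {H : Type*} [NormedAddCommGroup H] [InnerProductSpace ℝ H] [CompleteSpace H]
    (C : Set H) (hCc : IsClosed C) (hCv : Convex ℝ C)
    (T : H → H) (hTC : ∀ x ∈ C, T x ∈ C) (lam : ℝ) (hlam : lam ∈ Set.Ioo (0:ℝ) 1)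
    (hT : ∀ x ∈ C, ∀ y ∈ C,
      (inner ℝ (T x - T y) (x - y) : ℝ) ≤ ‖x - y‖ ^ 2 - lam * ‖(x - y) - (T x - T y)‖ ^ 2)
    (hF : ∃ p ∈ C, T p = p)
    (u x₀ : H) (hu : u ∈ C) (hx₀ : x₀ ∈ C)
    (α β γ : ℕ → ℝ)
    (hα : ∀ n, α n ∈ Set.Icc (0:ℝ) (2 * lam))
    (hliminf : 0 < Filter.liminf (fun n => α n * (2 * lam - α n)) Filter.atTop)
    (hβ : ∀ n, β n ∈ Set.Ioo (0:ℝ) 1) (hγ : ∀ n, γ n ∈ Set.Ioo (0:ℝ) 1)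
    (hβγ : ∀ n, β n + γ n ≤ 1)
    (hβ0 : Filter.Tendsto β Filter.atTop (nhds 0))
    (hβsum : Filter.Tendsto (fun n => ∑ i ∈ Finset.range n, β i) Filter.atTop Filter.atTop)
    (hγsup : Filter.limsup γ Filter.atTop < 1)
    (x : ℕ → H) (hx0 : x 0 = x₀) (hxC : ∀ n, x n ∈ C)
    (hrec : ∀ n, x (n + 1) =
      β n • u + γ n • x n + (1 - β n - γ n) • (α n • T (x n) + (1 - α n) • x n)) :
    ∃ z ∈ C, T z = z ∧ Filter.Tendsto x Filter.atTop (nhds z) := by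
  obtain ⟨hl0, hl1⟩ := hlam
  obtain ⟨p₀, hp₀C, hp₀T⟩ := hF
  -- key inner product inequality
  have key : ∀ a ∈ C, ∀ b ∈ C,
      lam * ‖(a - b) - (T a - T b)‖^2 ≤ ⟪(a - b) - (T a - T b), a - b⟫ := by
    intro a ha b hb
    have h := hT a ha b hb
    have h2 : ⟪T a - T b, a - b⟫ = ⟪a - b, a - b⟫ - ⟪(a - b) - (T a - T b), a - b⟫ := by
      simp only [inner_sub_left]; ring
    rw [h2, real_inner_self_eq_norm_sq] at h
    linarith
  -- Lipschitz property of T on C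
  have hTlip : ∀ a ∈ C, ∀ b ∈ C, ‖T a - T b‖ ≤ (1 + 1/lam) * ‖a - b‖ := by
    intro a ha b hb
    set d := (a - b) - (T a - T b) with hd
    have hk := key a ha b hb
    have hCS : ⟪d, a - b⟫ ≤ ‖d‖ * ‖a - b‖ := real_inner_le_norm _ _
    have hdle : lam * ‖d‖ ≤ ‖a - b‖ := by
      rcases (norm_nonneg d).eq_or_lt with h0 | h0
      · rw [← h0]; simpa using norm_nonneg (a - b)
      · nlinarith
    have hid : T a - T b = (a - b) - d := by rw [hd]; abel
    rw [hid]
    calc ‖(a - b) - d‖ ≤ ‖a - b‖ + ‖d‖ := norm_sub_le _ _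
      _ ≤ ‖a - b‖ + ‖a - b‖/lam := by
          refine add_le_add_right ?_ _
          rw [le_div_iff₀ hl0]
          linarith [hdle]
      _ = (1 + 1/lam) * ‖a - b‖ := by field_simp
  -- the averaged map G
  set G : H → H := fun v => lam • T v + (1 - lam) • v with hG
  have hGdiff : ∀ v, v - G v = lam • (v - T v) := by
    intro v; simp only [hG]; match_scalars <;> ring
  have hGC : ∀ v ∈ C, G v ∈ C :=
    fun v hv => hCv (hTC v hv) hv hl0.le (by linarith) (by ring)
  have hGnon : ∀ a ∈ C, ∀ b ∈ C, ‖G a - G b‖ ≤ ‖a - b‖ := by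
    intro a ha b hb
    have hid : G a - G b = (a - b) - lam • ((a - b) - (T a - T b)) := by
      simp only [hG]; match_scalars <;> ring
    have hsq := norm_sub_smul_sq (a - b) ((a - b) - (T a - T b)) lam lam hl0.le (key a ha b hb)
    have h2 : ‖(a - b) - lam • ((a - b) - (T a - T b))‖^2 ≤ ‖a - b‖^2 := by
      nlinarith [sq_nonneg ‖(a - b) - (T a - T b)‖, sq_nonneg lam]
    rw [hid]
    exact (pow_le_pow_iff_left₀ (norm_nonneg _) (norm_nonneg _) two_ne_zero).mp h2
  -- fixed point set
  set Fx : Set H := {q | q ∈ C ∧ T q = q} with hFx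
  have hGfix : ∀ v ∈ Fx, G v = v := by
    intro v hv
    have := hGdiff v
    rw [hv.2] at this
    simp at this
    rw [sub_eq_zero] at this
    exact this.symm
  have hFclosed : IsClosed Fx := by
    rw [← isSeqClosed_iff_isClosed]
    intro pk p hpk hlim
    have hpC : p ∈ C := hCc.isSeqClosed (fun k => (hpk k).1) hlim
    refine ⟨hpC, ?_⟩
    have hb : ∀ k, ‖T p - p‖ ≤ (2 + 1/lam) * ‖p - pk k‖ := by
      intro k
      have h1 : ‖T p - T (pk k)‖ ≤ (1 + 1/lam) * ‖p - pk k‖ := hTlip p hpC _ (hpk k).1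
      have h2 : ‖T p - p‖ ≤ ‖T p - T (pk k)‖ + ‖T (pk k) - p‖ := by
        have := norm_add_le (T p - T (pk k)) (T (pk k) - p)
        simpa using this
      have h3 : ‖T (pk k) - p‖ = ‖p - pk k‖ := by rw [(hpk k).2, norm_sub_rev]
      rw [h3] at h2
      linarith
    have hto : Tendsto (fun k => (2 + 1/lam) * ‖p - pk k‖) atTop (𝓝 0) := by
      have h1 : Tendsto (fun k => ‖p - pk k‖) atTop (𝓝 0) := by
        have := (tendsto_iff_norm_sub_tendsto_zero.mp hlim)
        refine this.congr (fun k => ?_)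
        rw [norm_sub_rev]
      simpa using h1.const_mul (2 + 1/lam)
    have : ‖T p - p‖ ≤ 0 :=
      le_of_tendsto_of_tendsto' tendsto_const_nhds hto hb
    rw [sub_eq_zero.mp (norm_le_zero_iff.mp this)]
  have hFconvex : Convex ℝ Fx := by
    intro p hp q hq a b ha hb hab
    have hb1 : b = 1 - a := by linarith
    subst hb1
    have ha1 : a ≤ 1 := by linarith
    set m := a • p + (1 - a) • q with hm
    have hmC : m ∈ C := hCv hp.1 hq.1 ha hb hab
    refine ⟨hmC, ?_⟩
    have hGp : G p = p := hGfix p hp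
    have hGq : G q = q := hGfix q hq
    have h1 : ‖G m - p‖ ≤ ‖m - p‖ := by
      have := hGnon m hmC p hp.1
      rwa [hGp] at this
    have h2 : ‖G m - q‖ ≤ ‖m - q‖ := by
      have := hGnon m hmC q hq.1
      rwa [hGq] at this
    have hmp : m - p = (1 - a) • (q - p) := by
      rw [hm]; match_scalars <;> ring
    have hmq : m - q = a • (p - q) := by
      rw [hm]; match_scalars <;> ring
    have hnp : ‖m - p‖ = (1 - a) * ‖p - q‖ := by
      rw [hmp, norm_smul, Real.norm_eq_abs, abs_of_nonneg hb, norm_sub_rev]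
    have hnq : ‖m - q‖ = a * ‖p - q‖ := by
      rw [hmq, norm_smul, Real.norm_eq_abs, abs_of_nonneg ha]
    have hidm : a • (G m - p) + (1 - a) • (G m - q) = G m - m := by
      rw [hm]; match_scalars <;> ring
    have hcombo := norm_combo_identity (G m - p) (G m - q) a
    rw [hidm] at hcombo
    have hdiffpq : (G m - p) - (G m - q) = q - p := by abel
    rw [hdiffpq] at hcombo
    have h1' : ‖G m - p‖^2 ≤ ((1 - a) * ‖p - q‖)^2 := by
      rw [← hnp]; exact pow_le_pow_left₀ (norm_nonneg _) h1 2
    have h2' : ‖G m - q‖^2 ≤ (a * ‖p - q‖)^2 := by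
      rw [← hnq]; exact pow_le_pow_left₀ (norm_nonneg _) h2 2
    have hqp : ‖q - p‖ = ‖p - q‖ := norm_sub_rev _ _
    rw [hqp] at hcombo
    have hGm : ‖G m - m‖^2 ≤ 0 := by
      nlinarith [mul_le_mul_of_nonneg_left h1' ha, mul_le_mul_of_nonneg_left h2' hb]
    have hGm0 : G m = m := by
      have h0 : ‖G m - m‖^2 = 0 := le_antisymm hGm (sq_nonneg _)
      have := norm_eq_zero.mp ((pow_eq_zero_iff two_ne_zero).mp h0)
      rwa [sub_eq_zero] at this
    have := hGdiff m
    rw [hGm0, sub_self] at this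
    have := (smul_eq_zero.mp this.symm).resolve_left (ne_of_gt hl0)
    rw [sub_eq_zero] at this
    exact this.symm
  -- the projection point z
  have hFne : Fx.Nonempty := ⟨p₀, hp₀C, hp₀T⟩
  obtain ⟨z, hzF, hzdist⟩ :=
    exists_norm_eq_iInf_of_complete_convex hFne (hFclosed.isComplete) hFconvex u
  have hproj : ∀ w ∈ Fx, ⟪u - z, w - z⟫ ≤ 0 :=
    (norm_eq_iInf_iff_real_inner_le_zero hFconvex hzF).mp hzdist
  have hzC : z ∈ C := hzF.1
  have hzT : T z = z := hzF.2
  refine ⟨z, hzC, hzT, ?_⟩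
  -- basic key inequality wrt z
  have hkeyn : ∀ n, lam * ‖x n - T (x n)‖^2 ≤ ⟪x n - T (x n), x n - z⟫ := by
    intro n
    have h := key (x n) (hxC n) z hzC
    rw [hzT] at h
    have e1 : (x n - z) - (T (x n) - z) = x n - T (x n) := by abel
    rwa [e1] at h
  -- quasi-nonexpansiveness of the averaged maps
  have hSle : ∀ n, ‖(x n - z) - α n • (x n - T (x n))‖ ≤ ‖x n - z‖ := by
    intro n
    have hsq := norm_sub_smul_sq (x n - z) (x n - T (x n)) (α n) lam (hα n).1 (hkeyn n)
    have h2 : ‖(x n - z) - α n • (x n - T (x n))‖^2 ≤ ‖x n - z‖^2 := by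
      nlinarith [mul_nonneg (mul_nonneg (hα n).1
        (by linarith [(hα n).2] : (0:ℝ) ≤ 2*lam - α n)) (sq_nonneg ‖x n - T (x n)‖)]
    exact (pow_le_pow_iff_left₀ (norm_nonneg _) (norm_nonneg _) two_ne_zero).mp h2
  -- boundedness
  set R : ℝ := max ‖x₀ - z‖ ‖u - z‖ with hRdef
  have hR : ∀ n, ‖x n - z‖ ≤ R := by
    intro n
    induction n with
    | zero => rw [hx0]; exact le_max_left _ _
    | succ n ih =>
      have hbn := hβ n; have hgn := hγ n
      have hδn : (0:ℝ) ≤ 1 - β n - γ n := by linarith [hβγ n]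
      have hid : x (n+1) - z = β n • (u - z) + γ n • (x n - z)
          + (1 - β n - γ n) • ((x n - z) - α n • (x n - T (x n))) := by
        rw [hrec n]; match_scalars <;> ring
      calc ‖x (n+1) - z‖
          ≤ ‖β n • (u - z)‖ + ‖γ n • (x n - z)‖
            + ‖(1 - β n - γ n) • ((x n - z) - α n • (x n - T (x n)))‖ := by
            rw [hid]
            exact (norm_add_le _ _).trans (add_le_add_left (norm_add_le _ _) _)
        _ = β n * ‖u - z‖ + γ n * ‖x n - z‖
            + (1 - β n - γ n) * ‖(x n - z) - α n • (x n - T (x n))‖ := by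
            rw [norm_smul, norm_smul, norm_smul, Real.norm_eq_abs, Real.norm_eq_abs,
              Real.norm_eq_abs, abs_of_nonneg hbn.1.le, abs_of_nonneg hgn.1.le,
              abs_of_nonneg hδn]
        _ ≤ β n * R + γ n * R + (1 - β n - γ n) * R := by
            have h1 : ‖u - z‖ ≤ R := le_max_right _ _
            have h2 : ‖(x n - z) - α n • (x n - T (x n))‖ ≤ R := (hSle n).trans ih
            have e1 := mul_le_mul_of_nonneg_left h1 hbn.1.le
            have e2 := mul_le_mul_of_nonneg_left ih hgn.1.le
            have e3 := mul_le_mul_of_nonneg_left h2 hδn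
            linarith
        _ = R := by ring
  have hR0 : 0 ≤ R := le_trans (norm_nonneg _) (le_max_left _ _)
  set B : ℝ := ‖z‖ + R with hBdef
  have hB : ∀ n, ‖x n‖ ≤ B := by
    intro n
    calc ‖x n‖ = ‖z + (x n - z)‖ := by congr 1; abel
      _ ≤ ‖z‖ + ‖x n - z‖ := norm_add_le _ _
      _ ≤ B := by rw [hBdef]; linarith [hR n]
  -- sequences
  set sfn : ℕ → ℝ := fun n => ‖x n - z‖^2 with hsfn
  set cfn : ℕ → ℝ := fun n => 2*⟪u - z, x (n+1) - z⟫ with hcfn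
  have hsE : ∀ m, sfn m = ‖x m - z‖^2 := fun _ => rfl
  have hcE : ∀ m, cfn m = 2*⟪u - z, x (m+1) - z⟫ := fun _ => rfl
  -- eventual constants
  have hγbdd : IsBoundedUnder (· ≤ ·) atTop γ :=
    ⟨1, eventually_map.mpr (Eventually.of_forall (fun n => (hγ n).2.le))⟩
  set gs : ℝ := limsup γ atTop with hgsdef
  have hγev : ∀ᶠ n in atTop, γ n < gs + (1 - gs)/4 :=
    eventually_lt_of_limsup_lt (by rw [← hgsdef]; linarith) hγbdd
  have hβev : ∀ᶠ n in atTop, β n < (1 - gs)/4 :=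
    hβ0.eventually (eventually_lt_nhds (by linarith))
  set δ0 : ℝ := (1 - gs)/2 with hδ0def
  have hδ0pos : 0 < δ0 := by rw [hδ0def]; linarith
  have hαbdd : IsBoundedUnder (· ≥ ·) atTop (fun n => α n * (2*lam - α n)) :=
    ⟨0, eventually_map.mpr (Eventually.of_forall
      (fun n => mul_nonneg (hα n).1 (by linarith [(hα n).2])))⟩
  set a0 : ℝ := (liminf (fun n => α n * (2 * lam - α n)) atTop)/2 with ha0def
  have ha0pos : 0 < a0 := by rw [ha0def]; linarith
  have hαev : ∀ᶠ n in atTop, a0 < α n * (2*lam - α n) :=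
    eventually_lt_of_lt_liminf (by rw [ha0def]; linarith) hαbdd
  set efn : ℕ → ℝ := fun n => (δ0*a0) * ‖x n - T (x n)‖^2 with hefn
  have heE : ∀ m, efn m = (δ0*a0) * ‖x m - T (x m)‖^2 := fun _ => rfl
  -- recursion 1
  have hrec1 : ∀ n, sfn (n+1) ≤ (1 - β n) * sfn n + β n * cfn n := by
    intro n
    have hbn := hβ n; have hgn := hγ n
    have hδn : (0:ℝ) ≤ 1 - β n - γ n := by linarith [hβγ n]
    set A : H := γ n • (x n - z) + (1 - β n - γ n) • ((x n - z) - α n • (x n - T (x n))) with hA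
    have hid : x (n+1) - z = A + β n • (u - z) := by
      rw [hrec n, hA]; match_scalars <;> ring
    have hexp : ‖A + β n • (u - z)‖^2
        = ‖A‖^2 + 2*⟪β n • (u - z), A + β n • (u - z)⟫ - ‖β n • (u - z)‖^2 := by
      rw [norm_add_sq_real, inner_add_right, real_inner_self_eq_norm_sq,
        real_inner_comm (β n • (u - z)) A]
      ring
    have hAle : ‖A‖ ≤ (1 - β n) * ‖x n - z‖ := by
      calc ‖A‖ ≤ ‖γ n • (x n - z)‖ + ‖(1 - β n - γ n) • ((x n - z) - α n • (x n - T (x n)))‖ :=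
            norm_add_le _ _
        _ = γ n * ‖x n - z‖ + (1 - β n - γ n) * ‖(x n - z) - α n • (x n - T (x n))‖ := by
            rw [norm_smul, norm_smul, Real.norm_eq_abs, Real.norm_eq_abs,
              abs_of_nonneg hgn.1.le, abs_of_nonneg hδn]
        _ ≤ γ n * ‖x n - z‖ + (1 - β n - γ n) * ‖x n - z‖ := by
            have := hSle n; gcongr
        _ = (1 - β n) * ‖x n - z‖ := by ring
    have hA2 : ‖A‖^2 ≤ (1 - β n) * ‖x n - z‖^2 := by
      have h1 : ‖A‖^2 ≤ ((1 - β n) * ‖x n - z‖)^2 := pow_le_pow_left₀ (norm_nonneg _) hAle 2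
      have h3 : ((1 - β n) * ‖x n - z‖)^2 ≤ (1 - β n) * ‖x n - z‖^2 := by
        nlinarith [hbn.1, hbn.2, sq_nonneg ‖x n - z‖]
      linarith
    have hinner : ⟪β n • (u - z), A + β n • (u - z)⟫ = β n * ⟪u - z, x (n+1) - z⟫ := by
      rw [real_inner_smul_left, ← hid]
    have hfinal : sfn (n+1) = ‖A + β n • (u - z)‖^2 := by rw [hsE (n+1), hid]
    rw [hfinal, hexp, hinner, hcE n, hsE n]
    have hB2 : 0 ≤ ‖β n • (u - z)‖^2 := sq_nonneg _
    linarith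
  -- recursion 2
  have hrec2 : ∀ᶠ n in atTop, sfn (n+1) ≤ sfn n + β n * ‖u - z‖^2 - efn n := by
    filter_upwards [hγev, hβev, hαev] with n h1 h2 h3
    have hbn := hβ n; have hgn := hγ n
    have hδn : (0:ℝ) ≤ 1 - β n - γ n := by linarith [hβγ n]
    have hδge : δ0 ≤ 1 - β n - γ n := by rw [hδ0def]; linarith
    have hid : x (n+1) - z = β n • (u - z) + γ n • (x n - z)
        + (1 - β n - γ n) • ((x n - z) - α n • (x n - T (x n))) := by
      rw [hrec n]; match_scalars <;> ring
    have hj := norm_convex3_sq (u - z) (x n - z) ((x n - z) - α n • (x n - T (x n)))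
      (β n) (γ n) (1 - β n - γ n) hbn.1.le hgn.1.le hδn (by ring)
    have hsq := norm_sub_smul_sq (x n - z) (x n - T (x n)) (α n) lam (hα n).1 (hkeyn n)
    have hprod : δ0 * a0 ≤ (1 - β n - γ n) * (α n * (2*lam - α n)) :=
      mul_le_mul hδge h3.le ha0pos.le hδn
    have hprod2 : (δ0 * a0) * ‖x n - T (x n)‖^2
        ≤ ((1 - β n - γ n) * (α n * (2*lam - α n))) * ‖x n - T (x n)‖^2 :=
      mul_le_mul_of_nonneg_right hprod (sq_nonneg _)
    have hs0 : 0 ≤ ‖x n - z‖^2 := sq_nonneg _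
    have hfin : sfn (n+1) = ‖β n • (u - z) + γ n • (x n - z)
        + (1 - β n - γ n) • ((x n - z) - α n • (x n - T (x n)))‖^2 := by
      rw [hsE (n+1), hid]
    rw [hfin, heE n, hsE n]
    have hd2 : (1 - β n - γ n) * ‖(x n - z) - α n • (x n - T (x n))‖^2
        ≤ (1 - β n - γ n) * (‖x n - z‖^2 - α n * (2*lam - α n) * ‖x n - T (x n)‖^2) :=
      mul_le_mul_of_nonneg_left hsq hδn
    nlinarith [mul_nonneg hbn.1.le hs0]
  -- geometric limsup lemma
  have hgeo : ∀ y : ℕ → H, (∀ k, y k ∈ C) →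
      Tendsto (fun k => ‖y k - T (y k)‖) atTop (𝓝 0) → (∀ k, ‖y k‖ ≤ B) →
      ∀ ε > (0:ℝ), ∀ᶠ k in atTop, ⟪u - z, y k - z⟫ ≤ ε := by
    intro y hyC hyT hyB ε hε
    by_contra hcon
    rw [not_eventually] at hcon
    have hfreq : ∃ᶠ k in atTop, ε < ⟪u - z, y k - z⟫ := hcon.mono (fun k hk => not_le.mp hk)
    obtain ⟨ψ, hψm, hψ⟩ := extraction_of_frequently_atTop hfreq
    obtain ⟨w, σ, hσm, hw⟩ := weak_subseq_aux (fun k => y (ψ k)) B (fun k => hyB _)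
    set q : ℕ → H := fun k => y (ψ (σ k)) with hq
    have hqw : ∀ yy : H, Tendsto (fun k => ⟪q k, yy⟫) atTop (𝓝 ⟪w, yy⟫) := hw
    have hqC : ∀ k, q k ∈ C := fun k => hyC _
    have hqT : Tendsto (fun k => ‖q k - T (q k)‖) atTop (𝓝 0) :=
      hyT.comp (hψm.comp hσm).tendsto_atTop
    have hqbd : ∀ k, ‖q k - w‖ ≤ B + ‖w‖ := fun k =>
      (norm_sub_le _ _).trans (add_le_add_left (hyB _) _)
    have hwC : w ∈ C := by
      by_contra hnC
      obtain ⟨f, cx, hfa, hfx⟩ := geometric_hahn_banach_closed_point hCv hCc hnC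
      have hrv : ∀ v : H, ⟪(InnerProductSpace.toDual ℝ H).symm f, v⟫ = f v :=
        fun v => InnerProductSpace.toDual_symm_apply
      have h1 : Tendsto (fun k => f (q k)) atTop (𝓝 (f w)) := by
        have h2 := hqw ((InnerProductSpace.toDual ℝ H).symm f)
        have he : ∀ k, ⟪q k, (InnerProductSpace.toDual ℝ H).symm f⟫ = f (q k) := fun k => by
          rw [real_inner_comm]; exact hrv _
        have hwe : ⟪w, (InnerProductSpace.toDual ℝ H).symm f⟫ = f w := by
          rw [real_inner_comm]; exact hrv _
        rw [hwe] at h2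
        exact h2.congr he
      have h2 : f w ≤ cx := le_of_tendsto h1 (Eventually.of_forall (fun k => (hfa _ (hqC k)).le))
      linarith
    have hwT : T w = w := by
      have haux : ∀ k, 2*⟪q k - w, w - G w⟫ + ‖w - G w‖^2
          ≤ 2*(lam*‖q k - T (q k)‖)*(B + ‖w‖) + (lam*‖q k - T (q k)‖)^2 := by
        intro k
        have e1 : ‖q k - G (q k)‖ = lam * ‖q k - T (q k)‖ := by
          rw [hGdiff (q k), norm_smul, Real.norm_eq_abs, abs_of_nonneg hl0.le]
        have e2 : ‖q k - G w‖ ≤ ‖q k - G (q k)‖ + ‖G (q k) - G w‖ := by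
          have := norm_add_le (q k - G (q k)) (G (q k) - G w)
          have e : q k - G (q k) + (G (q k) - G w) = q k - G w := by abel
          rwa [e] at this
        have e3 : ‖G (q k) - G w‖ ≤ ‖q k - w‖ := hGnon _ (hqC k) _ hwC
        have e4 : ‖q k - G w‖^2 ≤ (lam*‖q k - T (q k)‖ + ‖q k - w‖)^2 := by
          refine pow_le_pow_left₀ (norm_nonneg _) ?_ 2
          rw [← e1]
          linarith
        have e5 : ‖q k - G w‖^2 = ‖q k - w‖^2 + 2*⟪q k - w, w - G w⟫ + ‖w - G w‖^2 := by
          have e : q k - G w = (q k - w) + (w - G w) := by abel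
          rw [e, norm_add_sq_real]
        have e6 := hqbd k
        nlinarith [norm_nonneg (q k - T (q k)), norm_nonneg (q k - w),
          mul_nonneg hl0.le (norm_nonneg (q k - T (q k)))]
      have h2 : Tendsto (fun k => 2*⟪q k - w, w - G w⟫ + ‖w - G w‖^2) atTop (𝓝 (‖w - G w‖^2)) := by
        have h3 : Tendsto (fun k => ⟪q k - w, w - G w⟫) atTop (𝓝 0) := by
          have h4 := (hqw (w - G w)).sub_const ⟪w, w - G w⟫
          rw [sub_self] at h4
          refine h4.congr (fun k => ?_)
          rw [inner_sub_left]
        have := (h3.const_mul 2).add_const (‖w - G w‖^2)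
        simpa using this
      have h3 : Tendsto (fun k => 2*(lam*‖q k - T (q k)‖)*(B + ‖w‖)
          + (lam*‖q k - T (q k)‖)^2) atTop (𝓝 0) := by
        have h4 : Tendsto (fun k => lam*‖q k - T (q k)‖) atTop (𝓝 0) := by
          simpa using hqT.const_mul lam
        have h5 : Tendsto (fun k => 2*(lam*‖q k - T (q k)‖)*(B + ‖w‖)) atTop (𝓝 0) := by
          simpa using (h4.const_mul 2).mul_const (B + ‖w‖)
        have h6 : Tendsto (fun k => (lam*‖q k - T (q k)‖)^2) atTop (𝓝 0) := by
          have := h4.mul h4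
          simpa [pow_two] using this
        simpa using h5.add h6
      have h5 : ‖w - G w‖^2 ≤ 0 := le_of_tendsto_of_tendsto' h2 h3 haux
      have h6 : ‖w - G w‖^2 = 0 := le_antisymm h5 (sq_nonneg _)
      have h7 : w - G w = 0 := norm_eq_zero.mp ((pow_eq_zero_iff two_ne_zero).mp h6)
      have h8 := hGdiff w
      rw [h7] at h8
      have h9 := (smul_eq_zero.mp h8.symm).resolve_left (ne_of_gt hl0)
      rw [sub_eq_zero] at h9
      exact h9.symm
    have hlim2 : Tendsto (fun k => ⟪u - z, q k - z⟫) atTop (𝓝 ⟪u - z, w - z⟫) := by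
      have h1 := (hqw (u - z)).sub_const ⟪z, u - z⟫
      have he : ∀ k, ⟪q k, u - z⟫ - ⟪z, u - z⟫ = ⟪u - z, q k - z⟫ := fun k => by
        rw [← inner_sub_left, real_inner_comm]
      have hwe : ⟪w, u - z⟫ - ⟪z, u - z⟫ = ⟪u - z, w - z⟫ := by
        rw [← inner_sub_left, real_inner_comm]
      rw [hwe] at h1
      exact h1.congr he
    have hge : ε ≤ ⟪u - z, w - z⟫ :=
      ge_of_tendsto hlim2 (Eventually.of_forall (fun k => (hψ (σ k)).le))
    have := hproj w ⟨hwC, hwT⟩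
    linarith
  -- the subsequence condition
  have hcl : ∀ φ : ℕ → ℕ, Tendsto φ atTop atTop → Tendsto (fun k => efn (φ k)) atTop (𝓝 0) →
      ∀ ε > (0:ℝ), ∀ᶠ k in atTop, cfn (φ k) ≤ ε := by
    intro φ hφ heφ ε hε
    have hne : δ0 * a0 ≠ 0 := ne_of_gt (mul_pos hδ0pos ha0pos)
    have hd2 : Tendsto (fun k => ‖x (φ k) - T (x (φ k))‖^2) atTop (𝓝 0) := by
      have h1 := heφ.const_mul (δ0*a0)⁻¹
      rw [mul_zero] at h1
      refine h1.congr (fun k => ?_)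
      rw [heE (φ k)]
      field_simp
    have hdT : Tendsto (fun k => ‖x (φ k) - T (x (φ k))‖) atTop (𝓝 0) := by
      have h1 := (Real.continuous_sqrt.tendsto 0).comp hd2
      rw [Real.sqrt_zero] at h1
      refine h1.congr (fun k => ?_)
      simp only [Function.comp_apply]
      exact Real.sqrt_sq (norm_nonneg _)
    have hstep : ∀ n, ‖x (n+1) - x n‖ ≤ β n * (‖u - z‖ + R) + 2*‖x n - T (x n)‖ := by
      intro n
      have hbn := hβ n
      have hδn : (0:ℝ) ≤ 1 - β n - γ n := by linarith [hβγ n]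
      have hδn1 : 1 - β n - γ n ≤ 1 := by linarith [hbn.1, (hγ n).1]
      have hid : x (n+1) - x n = β n • (u - x n)
          + ((1 - β n - γ n) * α n) • (T (x n) - x n) := by
        rw [hrec n]; match_scalars <;> ring
      have hα2 : (1 - β n - γ n) * α n ≤ 2 := by
        have := (hα n).2
        nlinarith [(hα n).1]
      have hαnn : 0 ≤ (1 - β n - γ n) * α n := mul_nonneg hδn (hα n).1
      have hux : ‖u - x n‖ ≤ ‖u - z‖ + R := by
        have : u - x n = (u - z) - (x n - z) := by abel
        rw [this]
        exact (norm_sub_le _ _).trans (add_le_add_right (hR n) _)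
      have hTx : ‖T (x n) - x n‖ = ‖x n - T (x n)‖ := norm_sub_rev _ _
      calc ‖x (n+1) - x n‖
          ≤ ‖β n • (u - x n)‖ + ‖((1 - β n - γ n) * α n) • (T (x n) - x n)‖ := by
            rw [hid]; exact norm_add_le _ _
        _ = β n * ‖u - x n‖ + ((1 - β n - γ n) * α n) * ‖x n - T (x n)‖ := by
            rw [norm_smul, norm_smul, Real.norm_eq_abs, Real.norm_eq_abs,
              abs_of_nonneg hbn.1.le, abs_of_nonneg hαnn, hTx]
        _ ≤ β n * (‖u - z‖ + R) + 2*‖x n - T (x n)‖ := by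
            have h1 : β n * ‖u - x n‖ ≤ β n * (‖u - z‖ + R) :=
              mul_le_mul_of_nonneg_left hux hbn.1.le
            have h2 : ((1 - β n - γ n) * α n) * ‖x n - T (x n)‖ ≤ 2*‖x n - T (x n)‖ :=
              mul_le_mul_of_nonneg_right hα2 (norm_nonneg _)
            linarith
    have hΔ : Tendsto (fun k => ‖x (φ k + 1) - x (φ k)‖) atTop (𝓝 0) := by
      refine squeeze_zero' (Eventually.of_forall (fun k => norm_nonneg _))
        (Eventually.of_forall (fun k => hstep (φ k))) ?_
      have h1 : Tendsto (fun k => β (φ k) * (‖u - z‖ + R)) atTop (𝓝 0) := by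
        simpa using (hβ0.comp hφ).mul_const (‖u - z‖ + R)
      have h2 : Tendsto (fun k => 2*‖x (φ k) - T (x (φ k))‖) atTop (𝓝 0) := by
        simpa using hdT.const_mul 2
      simpa using h1.add h2
    have hgeoφ := hgeo (fun k => x (φ k)) (fun k => hxC _) hdT (fun k => hB _) (ε/4)
      (by linarith)
    have hprod : Tendsto (fun k => 2*‖u - z‖*‖x (φ k + 1) - x (φ k)‖) atTop (𝓝 0) := by
      simpa using hΔ.const_mul (2*‖u - z‖)
    have hsm : ∀ᶠ k in atTop, 2*‖u - z‖*‖x (φ k + 1) - x (φ k)‖ ≤ ε/2 :=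
      hprod.eventually (eventually_le_nhds (by linarith))
    filter_upwards [hgeoφ, hsm] with k h1 h2
    have hsplit : cfn (φ k) = 2*⟪u - z, x (φ k) - z⟫ + 2*⟪u - z, x (φ k + 1) - x (φ k)⟫ := by
      rw [hcE (φ k)]
      have e : x (φ k + 1) - z = (x (φ k) - z) + (x (φ k + 1) - x (φ k)) := by abel
      rw [e, inner_add_right]
      ring
    have h3 : 2*⟪u - z, x (φ k + 1) - x (φ k)⟫ ≤ 2*‖u - z‖*‖x (φ k + 1) - x (φ k)‖ := by
      have := real_inner_le_norm (u - z) (x (φ k + 1) - x (φ k))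
      nlinarith
    rw [hsplit]
    linarith
  -- conclude via the sequence lemma
  have hsten : Tendsto sfn atTop (𝓝 0) :=
    main_seq_lemma sfn β efn cfn (‖u - z‖^2)
      (fun n => by rw [hsE n]; exact sq_nonneg _)
      (fun n => by rw [heE n]; exact mul_nonneg (mul_pos hδ0pos ha0pos).le (sq_nonneg _))
      hβ hβ0 hβsum hrec1 hrec2 hcl
  have hnorm : Tendsto (fun n => ‖x n - z‖) atTop (𝓝 0) := by
    have h1 := (Real.continuous_sqrt.tendsto 0).comp hsten
    rw [Real.sqrt_zero] at h1
    refine h1.congr (fun n => ?_)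
    simp only [Function.comp_apply]
    rw [hsE n]
    exact Real.sqrt_sq (norm_nonneg _)
  exact tendsto_iff_norm_sub_tendsto_zero.mpr hnorm
end

section
/- Let C be a closed convex subset of a real Hilbert space and T : C → C a λ-strict pseudocontraction with F(T) ≠ ∅. Let u, x_0 ∈ C and x_{n+1} = β_n u + (1 − β_n)[α_n T x_n + (1 − α_n) x_n], where α_n ∈ [0, 2λ] with liminf α_n(2λ − α_n) > 0, and β_n ∈ (0,1) with β_n → 0 and ∑ β_n = ∞. Then {x_n} converges strongly to a fixed point of T. -/
open Filter

section helpers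
variable {H : Type*} [NormedAddCommGroup H] [InnerProductSpace ℝ H]

-- three point identity
lemma aux3 (t : ℝ) (a b : H) :
    ‖t • a + (1 - t) • b‖ ^ 2 = t * ‖a‖ ^ 2 + (1 - t) * ‖b‖ ^ 2 - t * (1 - t) * ‖b - a‖ ^ 2 := by
  have h := norm_add_sq_real (t • a) ((1 - t) • b)
  have h2 := norm_sub_sq_real b a
  simp only [norm_smul, Real.norm_eq_abs, mul_pow, sq_abs, real_inner_smul_left,
    real_inner_smul_right] at h
  rw [h, h2, real_inner_comm a b]
  ring

lemma aux2 (q r : H) : ‖q + r‖ ^ 2 ≤ ‖q‖ ^ 2 + 2 * (inner ℝ r (q + r) : ℝ) := by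
  have h := norm_add_sq_real q r
  have h2 : (inner ℝ r (q + r) : ℝ) = inner ℝ r q + inner ℝ r r := inner_add_right r q r
  have h3 : (inner ℝ r r : ℝ) = ‖r‖ ^ 2 := real_inner_self_eq_norm_sq r
  have h4 : (inner ℝ q r : ℝ) = inner ℝ r q := (real_inner_comm r q)
  nlinarith [sq_nonneg ‖r‖]

lemma auxcomb (b : ℝ) (hb0 : 0 ≤ b) (hb1 : b ≤ 1) (v w : H) :
    ‖b • v + (1 - b) • w‖ ^ 2 ≤ b * ‖v‖ ^ 2 + (1 - b) * ‖w‖ ^ 2 := by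
  have h := aux3 b v w
  nlinarith [sq_nonneg ‖w - v‖, mul_nonneg hb0 (sub_nonneg.mpr hb1), sq_nonneg ‖w-v‖, mul_nonneg (mul_nonneg hb0 (sub_nonneg.mpr hb1)) (sq_nonneg ‖w - v‖)]

lemma tendsto_of_sq {g : ℕ → ℝ} (hg : ∀ n, 0 ≤ g n)
    (h : Tendsto (fun n => g n ^ 2) atTop (nhds 0)) : Tendsto g atTop (nhds 0) := by
  have h1 := (Real.continuous_sqrt.continuousAt.tendsto).comp h
  rw [Real.sqrt_zero] at h1
  exact h1.congr fun n => Real.sqrt_sq (hg n)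

end helpers

section keysec
variable {H : Type*} [NormedAddCommGroup H] [InnerProductSpace ℝ H] [CompleteSpace H]
lemma ulim_exists {U : Ultrafilter ℕ} (r : ℕ → ℝ) (M : ℝ) (hM : ∀ k, |r k| ≤ M) :
    ∃ L, Tendsto r ↑U (nhds L) := by
  have hsub : ∀ k, r k ∈ Set.Icc (-M) M := fun k => abs_le.mp (hM k)
  have hle : ↑(U.map r) ≤ Filter.principal (Set.Icc (-M) M) := by
    rw [Ultrafilter.coe_map, le_principal_iff]
    exact Filter.mem_map.mpr (Filter.univ_mem' hsub)
  obtain ⟨a, _, ha⟩ := (isCompact_Icc (a := -M) (b := M)).ultrafilter_le_nhds (U.map r) hle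
  exact ⟨a, by rw [Tendsto, ← Ultrafilter.coe_map]; exact ha⟩

lemma key_lemma (C : Set H) (hCc : IsClosed C) (hCv : Convex ℝ C)
    (S : H → H) (hSnon : ∀ a ∈ C, ∀ b ∈ C, ‖S a - S b‖ ≤ ‖a - b‖)
    (u z : H)
    (hproj : ∀ w ∈ C, S w = w → (inner ℝ (u - z) (w - z) : ℝ) ≤ 0)
    (w : ℕ → H) (hwC : ∀ k, w k ∈ C) (M : ℝ) (hM : ∀ k, ‖w k‖ ≤ M)
    (hw : Tendsto (fun k => ‖w k - S (w k)‖) atTop (nhds 0)) :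
    ∀ ε > 0, ∀ᶠ k in atTop, (inner ℝ (u - z) (w k - z) : ℝ) < ε := by
  intro ε hε
  by_contra hcon
  rw [Filter.not_eventually] at hcon
  have hcon' : ∃ᶠ k in atTop, ε ≤ (inner ℝ (u - z) (w k - z) : ℝ) := by
    refine hcon.mono fun k hk => ?_
    push_neg at hk; exact hk
  have hne : (atTop ⊓ Filter.principal
      {k | ε ≤ (inner ℝ (u - z) (w k - z) : ℝ)}).NeBot :=
    Filter.frequently_iff_neBot.mp hcon'
  obtain ⟨U, hU⟩ := Ultrafilter.exists_le (atTop ⊓ Filter.principal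
      {k | ε ≤ (inner ℝ (u - z) (w k - z) : ℝ)})
  have hUtop : ↑U ≤ (atTop : Filter ℕ) := hU.trans inf_le_left
  have hUset : ∀ᶠ k in ↑U, ε ≤ (inner ℝ (u - z) (w k - z) : ℝ) :=
    Filter.le_principal_iff.mp (hU.trans inf_le_right)
  have hM0 : 0 ≤ M := (norm_nonneg (w 0)).trans (hM 0)
  have hMy : ∀ y : H, ∀ k, |(inner ℝ (w k) y : ℝ)| ≤ M * ‖y‖ := fun y k =>
    (abs_real_inner_le_norm _ _).trans (mul_le_mul_of_nonneg_right (hM k) (norm_nonneg y))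
  choose Φ0 hΦ0 using fun y : H =>
    ulim_exists (U := U) (fun k => (inner ℝ (w k) y : ℝ)) (M * ‖y‖) (hMy y)
  have hadd : ∀ y y', Φ0 (y + y') = Φ0 y + Φ0 y' := by
    intro y y'
    refine tendsto_nhds_unique (hΦ0 (y + y')) ?_
    have h := (hΦ0 y).add (hΦ0 y')
    simpa [inner_add_right] using h
  have hsmul : ∀ (c : ℝ) (y : H), Φ0 (c • y) = c * Φ0 y := by
    intro c y
    refine tendsto_nhds_unique (hΦ0 (c • y)) ?_
    have h := (hΦ0 y).const_mul c
    simpa [real_inner_smul_right] using h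
  have hbd : ∀ y, ‖Φ0 y‖ ≤ M * ‖y‖ := by
    intro y
    rw [Real.norm_eq_abs]
    exact le_of_tendsto (hΦ0 y).abs (Filter.Eventually.of_forall (hMy y))
  let Φ : H →L[ℝ] ℝ := LinearMap.mkContinuous
    { toFun := Φ0, map_add' := hadd, map_smul' := hsmul } M hbd
  set v : H := (InnerProductSpace.toDual ℝ H).symm Φ with hvdef
  have hv : ∀ y, (inner ℝ v y : ℝ) = Φ0 y := fun y =>
    InnerProductSpace.toDual_symm_apply
  -- limit of ‖w k‖^2
  obtain ⟨c2, hc2⟩ := ulim_exists (U := U) (fun k => ‖w k‖ ^ 2) (M ^ 2)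
    (fun k => by
      rw [abs_of_nonneg (sq_nonneg _)]
      exact pow_le_pow_left₀ (norm_nonneg _) (hM k) 2)
  set G : H → ℝ := fun y => c2 - 2 * Φ0 y + ‖y‖ ^ 2 with hGdef
  have hG : ∀ y, Tendsto (fun k => ‖w k - y‖ ^ 2) ↑U (nhds (G y)) := by
    intro y
    have h : ∀ k, ‖w k - y‖ ^ 2 = ‖w k‖ ^ 2 - 2 * (inner ℝ (w k) y : ℝ) + ‖y‖ ^ 2 :=
      fun k => norm_sub_sq_real _ _
    simp only [h]
    exact (hc2.sub ((hΦ0 y).const_mul 2)).add tendsto_const_nhds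
  have hGnn : ∀ y, 0 ≤ G y := fun y =>
    ge_of_tendsto (hG y) (Filter.Eventually.of_forall fun k => sq_nonneg _)
  have hGv : ∀ y, G y = ‖y - v‖ ^ 2 + (c2 - ‖v‖ ^ 2) := by
    intro y
    have h1 := norm_sub_sq_real y v
    have h2 : (inner ℝ y v : ℝ) = Φ0 y := by rw [real_inner_comm]; exact hv y
    have h3 : ‖v‖ ^ 2 = (inner ℝ v v : ℝ) := (real_inner_self_eq_norm_sq v).symm
    simp only [hGdef]
    rw [h1, h2]
    ring
  -- v ∈ C
  have hvC : v ∈ C := by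
    by_contra hvc
    obtain ⟨f, r, hfa, hfv⟩ := geometric_hahn_banach_closed_point hCv hCc hvc
    set wf : H := (InnerProductSpace.toDual ℝ H).symm f with hwfdef
    have hwf : ∀ y, (inner ℝ wf y : ℝ) = f y := fun y => InnerProductSpace.toDual_symm_apply
    have hfv2 : f v = Φ0 wf := by
      rw [← hwf v, real_inner_comm]; exact hv wf
    have hten : Tendsto (fun k => f (w k)) ↑U (nhds (f v)) := by
      rw [hfv2]
      have h := hΦ0 wf
      refine h.congr fun k => ?_
      rw [← hwf (w k), real_inner_comm]
    have : f v ≤ r :=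
      le_of_tendsto hten (Filter.Eventually.of_forall fun k => (hfa _ (hwC k)).le)
    linarith
  -- S decreases G on C
  have hSG : ∀ y ∈ C, G (S y) ≤ G y := by
    intro y hy
    have hpt : ∀ k, ‖w k - S y‖ ^ 2 ≤ (‖w k - S (w k)‖ + ‖w k - y‖) ^ 2 := by
      intro k
      have h1 : ‖w k - S y‖ ≤ ‖w k - S (w k)‖ + ‖S (w k) - S y‖ :=
        norm_sub_le_norm_sub_add_norm_sub _ _ _
      have h2 := hSnon _ (hwC k) _ hy
      exact pow_le_pow_left₀ (norm_nonneg _) (by linarith) 2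
    have hε0 : Tendsto (fun k => ‖w k - S (w k)‖) ↑U (nhds 0) := hw.mono_left hUtop
    have hny : Tendsto (fun k => ‖w k - y‖) ↑U (nhds (Real.sqrt (G y))) := by
      have h1 : Tendsto (fun k => Real.sqrt (‖w k - y‖ ^ 2)) ↑U
          (nhds (Real.sqrt (G y))) :=
        (Real.continuous_sqrt.continuousAt.tendsto).comp (hG y)
      refine h1.congr fun k => ?_
      rw [Real.sqrt_sq (norm_nonneg _)]
    have hrhs : Tendsto (fun k => (‖w k - S (w k)‖ + ‖w k - y‖) ^ 2) ↑U (nhds (G y)) := by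
      have h := (hε0.add hny).pow 2
      rwa [zero_add, Real.sq_sqrt (hGnn y)] at h
    exact le_of_tendsto_of_tendsto' (hG (S y)) hrhs hpt
  -- v is a fixed point of S
  have hvF : S v = v := by
    have h := hSG v hvC
    rw [hGv (S v), hGv v] at h
    have h2 : ‖S v - v‖ ^ 2 ≤ 0 := by
      have := sq_nonneg ‖v - v‖
      simp only [sub_self, norm_zero] at h
      nlinarith
    have h3 : ‖S v - v‖ = 0 := by nlinarith [sq_nonneg ‖S v - v‖, norm_nonneg (S v - v)]
    rw [← sub_eq_zero]
    exact norm_eq_zero.mp h3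
  -- conclude
  have hlim : Tendsto (fun k => (inner ℝ (u - z) (w k - z) : ℝ)) ↑U
      (nhds ((inner ℝ (u - z) (v - z) : ℝ))) := by
    have h1 : ∀ k, (inner ℝ (u - z) (w k - z) : ℝ) =
        (inner ℝ (w k) (u - z) : ℝ) - (inner ℝ (u - z) z : ℝ) := by
      intro k
      rw [inner_sub_right, real_inner_comm (w k) (u - z)]
    have h2 : (inner ℝ (u - z) (v - z) : ℝ) = Φ0 (u - z) - (inner ℝ (u - z) z : ℝ) := by
      rw [inner_sub_right, ← hv (u - z), real_inner_comm v (u - z)]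
    rw [h2]
    exact ((hΦ0 (u - z)).sub tendsto_const_nhds).congr fun k => (h1 k).symm
  have hfin : ε ≤ (inner ℝ (u - z) (v - z) : ℝ) := ge_of_tendsto hlim hUset
  have := hproj v hvC hvF
  linarith

end keysec

set_option maxHeartbeats 1600000 in
theorem stmt_10 {H : Type*} [NormedAddCommGroup H] [InnerProductSpace ℝ H] [CompleteSpace H]
    (C : Set H) (hCc : IsClosed C) (hCv : Convex ℝ C)
    (T : H → H) (hTC : ∀ x ∈ C, T x ∈ C) (lam : ℝ) (hlam : lam ∈ Set.Ioo (0:ℝ) 1)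
    (hT : ∀ x ∈ C, ∀ y ∈ C,
      (inner ℝ (T x - T y) (x - y) : ℝ) ≤ ‖x - y‖ ^ 2 - lam * ‖(x - y) - (T x - T y)‖ ^ 2)
    (hF : ∃ p ∈ C, T p = p)
    (u x₀ : H) (hu : u ∈ C) (hx₀ : x₀ ∈ C)
    (α β : ℕ → ℝ)
    (hα : ∀ n, α n ∈ Set.Icc (0:ℝ) (2 * lam))
    (hliminf : 0 < Filter.liminf (fun n => α n * (2 * lam - α n)) Filter.atTop)
    (hβ : ∀ n, β n ∈ Set.Ioo (0:ℝ) 1)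
    (hβ0 : Filter.Tendsto β Filter.atTop (nhds 0))
    (hβsum : Filter.Tendsto (fun n => ∑ i ∈ Finset.range n, β i) Filter.atTop Filter.atTop)
    (x : ℕ → H) (hx0 : x 0 = x₀) (hxC : ∀ n, x n ∈ C)
    (hrec : ∀ n, x (n + 1) =
      β n • u + (1 - β n) • (α n • T (x n) + (1 - α n) • x n)) :
    ∃ z ∈ C, T z = z ∧ Filter.Tendsto x Filter.atTop (nhds z) := by
  classical
  obtain ⟨hl0, hl1⟩ := hlam
  set S : H → H := fun w => lam • T w + (1 - lam) • w with hSdef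
  -- basic inner ℝ product consequence of strict pseudocontractivity
  have hinner : ∀ a ∈ C, ∀ b ∈ C, lam * ‖(a - b) - (T a - T b)‖ ^ 2 ≤
      (inner ℝ (a - b) ((a - b) - (T a - T b)) : ℝ) := by
    intro a ha b hb
    have h := hT a ha b hb
    have h2 : (inner ℝ (a - b) ((a - b) - (T a - T b)) : ℝ)
        = ‖a - b‖ ^ 2 - (inner ℝ (T a - T b) (a - b) : ℝ) := by
      rw [inner_sub_right, real_inner_self_eq_norm_sq, real_inner_comm]
    linarith
  have hexp : ∀ (t : ℝ) (a d : H),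
      ‖a - t • d‖ ^ 2 = ‖a‖ ^ 2 - 2 * t * (inner ℝ a d : ℝ) + t ^ 2 * ‖d‖ ^ 2 := by
    intro t a d
    rw [norm_sub_sq_real, real_inner_smul_right, norm_smul, Real.norm_eq_abs, mul_pow, sq_abs]
    ring
  have hSab : ∀ a b : H, S a - S b = (a - b) - lam • ((a - b) - (T a - T b)) := by
    intro a b; simp only [hSdef]; module
  have hSnon : ∀ a ∈ C, ∀ b ∈ C, ‖S a - S b‖ ≤ ‖S a - S b‖ ∧ ‖S a - S b‖ ≤ ‖a - b‖ := by
    intro a ha b hb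
    refine ⟨le_rfl, ?_⟩
    have h1 := hinner a ha b hb
    have h2 : ‖S a - S b‖ ^ 2 ≤ ‖a - b‖ ^ 2 := by
      rw [hSab, hexp]
      nlinarith [sq_nonneg ‖(a - b) - (T a - T b)‖]
    have h3 := Real.sqrt_le_sqrt h2
    rwa [Real.sqrt_sq (norm_nonneg _), Real.sqrt_sq (norm_nonneg _)] at h3
  have hSnon' : ∀ a ∈ C, ∀ b ∈ C, ‖S a - S b‖ ≤ ‖a - b‖ := fun a ha b hb =>
    (hSnon a ha b hb).2
  have hSC : ∀ w ∈ C, S w ∈ C := fun w hw =>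
    hCv (hTC w hw) hw hl0.le (by linarith) (by ring)
  have hSsub : ∀ w : H, w - S w = lam • (w - T w) := by
    intro w; simp only [hSdef]; module
  have hSfix : ∀ w ∈ C, (S w = w ↔ T w = w) := by
    intro w _
    constructor
    · intro h
      have h2 : lam • (w - T w) = 0 := by rw [← hSsub, h, sub_self]
      rcases smul_eq_zero.mp h2 with h3 | h3
      · exact absurd h3 (ne_of_gt hl0)
      · rw [sub_eq_zero] at h3; exact h3.symm
    · intro h; simp only [hSdef, h]; module
  -- the fixed point set
  set F : Set H := {p | p ∈ C ∧ T p = p} with hFdef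
  have hFne : F.Nonempty := by obtain ⟨p, hp1, hp2⟩ := hF; exact ⟨p, hp1, hp2⟩
  have hFc : IsClosed F := by
    refine isClosed_of_closure_subset ?_
    intro p hp
    obtain ⟨f, hfF, hfp⟩ := mem_closure_iff_seq_limit.mp hp
    have hpC : p ∈ C := hCc.mem_of_tendsto hfp (Eventually.of_forall fun n => (hfF n).1)
    have hSp : ∀ n, ‖S p - p‖ ≤ 2 * ‖p - f n‖ := by
      intro n
      have h1 : ‖S p - S (f n)‖ ≤ ‖p - f n‖ := hSnon' p hpC (f n) (hfF n).1
      have h2 : S (f n) = f n := (hSfix (f n) (hfF n).1).mpr (hfF n).2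
      calc ‖S p - p‖ ≤ ‖S p - S (f n)‖ + ‖S (f n) - p‖ :=
            norm_sub_le_norm_sub_add_norm_sub _ _ _
        _ ≤ ‖p - f n‖ + ‖f n - p‖ := by rw [h2] at h1 ⊢; linarith
        _ = 2 * ‖p - f n‖ := by rw [norm_sub_rev p (f n)]; ring
    have h0 : Tendsto (fun n => 2 * ‖p - f n‖) atTop (nhds 0) := by
      have h1 : Tendsto (fun n => ‖p - f n‖) atTop (nhds 0) := by
        have := (tendsto_iff_norm_sub_tendsto_zero.mp hfp)
        exact this.congr fun n => by rw [norm_sub_rev]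
      simpa using h1.const_mul 2
    have h2 : ‖S p - p‖ ≤ 0 := ge_of_tendsto h0 (Eventually.of_forall hSp)
    have h3 : S p = p := by
      rw [← sub_eq_zero]
      exact norm_le_zero_iff.mp h2
    exact ⟨hpC, (hSfix p hpC).mp h3⟩
  have hFconv : Convex ℝ F := by
    intro p hp q hq ta tb hta htb htab
    set m := ta • p + tb • q with hmdef
    have hmC : m ∈ C := hCv hp.1 hq.1 hta htb htab
    have htb' : tb = 1 - ta := by linarith
    have hmw : ∀ w : H, w - m = ta • (w - p) + (1 - ta) • (w - q) := by
      intro w; rw [hmdef, htb']; module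
    have hid : ∀ w : H,
        ‖w - m‖ ^ 2 = ta * ‖w - p‖ ^ 2 + (1 - ta) * ‖w - q‖ ^ 2
          - ta * (1 - ta) * ‖(w - q) - (w - p)‖ ^ 2 := by
      intro w; rw [hmw w]; exact aux3 ta (w - p) (w - q)
    have hSm : S m = m := by
      have h1 : ‖S m - p‖ ≤ ‖m - p‖ := by
        have := hSnon' m hmC p hp.1
        rwa [(hSfix p hp.1).mpr hp.2] at this
      have h2 : ‖S m - q‖ ≤ ‖m - q‖ := by
        have := hSnon' m hmC q hq.1
        rwa [(hSfix q hq.1).mpr hq.2] at this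
      have h3 := hid (S m)
      have h4 := hid m
      have h5 : ‖S m - m‖ ^ 2 ≤ 0 := by
        have e1 : ((S m) - q) - ((S m) - p) = p - q := by abel
        have e2 : (m - q) - (m - p) = p - q := by abel
        rw [e1] at h3; rw [e2] at h4
        have h6 : ‖m - m‖ ^ 2 = 0 := by simp
        nlinarith [pow_le_pow_left₀ (norm_nonneg (S m - p)) h1 2,
          pow_le_pow_left₀ (norm_nonneg (S m - q)) h2 2]
      have h6 : ‖S m - m‖ = 0 := by nlinarith [norm_nonneg (S m - m)]
      rw [← sub_eq_zero]; exact norm_eq_zero.mp h6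
    exact ⟨hmC, (hSfix m hmC).mp hSm⟩
  -- projection of u onto F
  obtain ⟨z, hzF, hzmin⟩ :=
    exists_norm_eq_iInf_of_complete_convex hFne (hFc.isComplete) hFconv u
  have hprojF : ∀ w ∈ F, (inner ℝ (u - z) (w - z) : ℝ) ≤ 0 :=
    (norm_eq_iInf_iff_real_inner_le_zero hFconv hzF).mp hzmin
  have hzC : z ∈ C := hzF.1
  have hzT : T z = z := hzF.2
  have hzS : S z = z := (hSfix z hzC).mpr hzT
  have hproj : ∀ w ∈ C, S w = w → (inner ℝ (u - z) (w - z) : ℝ) ≤ 0 := fun w hw hSw =>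
    hprojF w ⟨hw, (hSfix w hw).mp hSw⟩
  -- the iteration
  set y : ℕ → H := fun n => α n • T (x n) + (1 - α n) • x n with hydef
  have hxrec : ∀ n, x (n + 1) = β n • u + (1 - β n) • y n := hrec
  have hysub : ∀ n, ∀ p : H, y n - p = (x n - p) - α n • (x n - T (x n)) := by
    intro n p; simp only [hydef]; module
  have hkey : ∀ n, ∀ p ∈ C, T p = p →
      ‖y n - p‖ ^ 2 ≤ ‖x n - p‖ ^ 2
        - (α n * (2 * lam - α n)) * ‖x n - T (x n)‖ ^ 2 := by
    intro n p hpC hpT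
    have h1 := hinner (x n) (hxC n) p hpC
    rw [hpT] at h1
    have h2 : (x n - p) - (T (x n) - p) = x n - T (x n) := by abel
    rw [h2] at h1
    rw [hysub n p, hexp]
    have hα1 := (hα n).1
    nlinarith [sq_nonneg ‖x n - T (x n)‖]
  have hcnn : ∀ n, 0 ≤ (α n * (2 * lam - α n)) * ‖x n - T (x n)‖ ^ 2 := fun n =>
    mul_nonneg (mul_nonneg (hα n).1 (by linarith [(hα n).2])) (sq_nonneg _)
  have hyz : ∀ n, ‖y n - z‖ ≤ ‖x n - z‖ := by
    intro n
    have h1 := hkey n z hzC hzT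
    have h2 : ‖y n - z‖ ^ 2 ≤ ‖x n - z‖ ^ 2 := by linarith [hcnn n]
    have h3 := Real.sqrt_le_sqrt h2
    rwa [Real.sqrt_sq (norm_nonneg _), Real.sqrt_sq (norm_nonneg _)] at h3
  have hx1sub : ∀ n, x (n + 1) - z = (1 - β n) • (y n - z) + β n • (u - z) := by
    intro n; rw [hxrec n]; module
  set R : ℝ := max ‖x₀ - z‖ ‖u - z‖ with hRdef
  have hR : ∀ n, ‖x n - z‖ ≤ R := by
    intro n
    induction n with
    | zero => rw [hx0]; exact le_max_left _ _
    | succ n ih =>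
      have hβn := hβ n
      have h1 : ‖x (n + 1) - z‖ ≤ (1 - β n) * ‖y n - z‖ + β n * ‖u - z‖ := by
        rw [hx1sub n]
        refine (norm_add_le _ _).trans ?_
        rw [norm_smul, norm_smul, Real.norm_eq_abs, Real.norm_eq_abs,
          abs_of_nonneg (by linarith [hβn.2] : (0:ℝ) ≤ 1 - β n),
          abs_of_nonneg hβn.1.le]
      have h2 : ‖u - z‖ ≤ R := le_max_right _ _
      have h3 := hyz n
      nlinarith [norm_nonneg (y n - z), hβn.1, hβn.2]
  have hR0 : 0 ≤ R := (norm_nonneg _).trans (hR 0)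
  have hxbd : ∀ n, ‖x n‖ ≤ R + ‖z‖ := by
    intro n
    have h1 := norm_add_le (x n - z) z
    rw [sub_add_cancel] at h1
    linarith [hR n]
  have hxT : ∀ n, ‖x n - S (x n)‖ = lam * ‖x n - T (x n)‖ := by
    intro n
    rw [hSsub (x n), norm_smul, Real.norm_eq_abs, abs_of_nonneg hl0.le]
  have hxTbd : ∀ n, ‖x n - T (x n)‖ ≤ 2 * R / lam := by
    intro n
    have h1 : ‖S (x n) - S z‖ ≤ ‖x n - z‖ := hSnon' (x n) (hxC n) z hzC
    rw [hzS] at h1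
    have h2 : ‖x n - S (x n)‖ ≤ 2 * R := by
      calc ‖x n - S (x n)‖ ≤ ‖x n - z‖ + ‖z - S (x n)‖ :=
            norm_sub_le_norm_sub_add_norm_sub _ _ _
        _ = ‖x n - z‖ + ‖S (x n) - z‖ := by rw [norm_sub_rev z]
        _ ≤ 2 * R := by linarith [hR n]
    rw [hxT n] at h2
    rw [div_eq_mul_inv]
    calc ‖x n - T (x n)‖ = lam * ‖x n - T (x n)‖ * lam⁻¹ := by
          field_simp
      _ ≤ 2 * R * lam⁻¹ := by
          exact mul_le_mul_of_nonneg_right h2 (inv_nonneg.mpr hl0.le)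
  set a : ℕ → ℝ := fun n => ‖x n - z‖ ^ 2 with hadef
  set c : ℕ → ℝ := fun n => (α n * (2 * lam - α n)) * ‖x n - T (x n)‖ ^ 2 with hcdef
  set K : ℝ := ‖u - z‖ ^ 2 with hKdef
  set s : ℕ → ℝ := fun n => (inner ℝ (u - z) (x (n + 1) - z) : ℝ) with hsdef
  have hann : ∀ n, 0 ≤ a n := fun n => sq_nonneg _
  have hKnn : 0 ≤ K := sq_nonneg _
  have hIneqA : ∀ n, a (n + 1) ≤ β n * K + a n - (1 - β n) * c n := by
    intro n
    have hβn := hβ n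
    have h1 : a (n + 1) ≤ β n * K + (1 - β n) * ‖y n - z‖ ^ 2 := by
      have h2 := auxcomb (β n) hβn.1.le (hβn.2.le) (u - z) (y n - z)
      have h3 : x (n + 1) - z = β n • (u - z) + (1 - β n) • (y n - z) := by
        rw [hx1sub n]; abel
      simp only [hadef]
      rw [h3]
      exact h2
    have h4 := hkey n z hzC hzT
    have h5 : ‖y n - z‖ ^ 2 ≤ a n - c n := h4
    nlinarith [hann n, hβn.1, hβn.2]
  have hIneqB : ∀ n, a (n + 1) ≤ (1 - β n) * a n + 2 * β n * s n := by
    intro n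
    have hβn := hβ n
    have h1 := aux2 ((1 - β n) • (y n - z)) (β n • (u - z))
    rw [← hx1sub n] at h1
    have h2 : (inner ℝ (β n • (u - z)) (x (n + 1) - z) : ℝ) = β n * s n := by
      rw [real_inner_smul_left]
    rw [h2] at h1
    have h3 : ‖(1 - β n) • (y n - z)‖ ^ 2 = (1 - β n) ^ 2 * ‖y n - z‖ ^ 2 := by
      rw [norm_smul, Real.norm_eq_abs, mul_pow, sq_abs]
    rw [h3] at h1
    have h4 := hyz n
    have h5 : ‖y n - z‖ ^ 2 ≤ a n := by
      have := pow_le_pow_left₀ (norm_nonneg _) h4 2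
      exact this
    have ha1 : a (n + 1) = ‖x (n + 1) - z‖ ^ 2 := rfl
    have h6 : (1 - β n) ^ 2 * ‖y n - z‖ ^ 2 ≤ (1 - β n) * a n := by
      nlinarith [hβn.1, hβn.2, hann n, sq_nonneg ‖y n - z‖]
    rw [ha1]
    linarith
  set δ : ℝ := liminf (fun n => α n * (2 * lam - α n)) atTop with hδdef
  have hδ0 : 0 < δ := hliminf
  have hN0 : ∀ᶠ n in atTop, δ / 2 < α n * (2 * lam - α n) := by
    refine eventually_lt_of_lt_liminf (by linarith) ?_
    exact Filter.isBoundedUnder_of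
      ⟨0, fun n => mul_nonneg (hα n).1 (by linarith [(hα n).2])⟩
  -- it suffices to show a n → 0
  suffices hsmall : ∀ ε > 0, ∀ᶠ n in atTop, a n < ε by
    have ha0 : Tendsto a atTop (nhds 0) :=
      tendsto_order.2 ⟨fun b hb => Eventually.of_forall fun n => lt_of_lt_of_le hb (hann n),
        fun b hb => hsmall b hb⟩
    have hxz : Tendsto x atTop (nhds z) := by
      rw [tendsto_iff_norm_sub_tendsto_zero]
      exact tendsto_of_sq (fun n => norm_nonneg _) ha0
    exact ⟨z, hzC, hzT, hxz⟩
  intro ε hε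
  by_cases hcase : ∃ N, ∀ n, N ≤ n → a (n + 1) ≤ a n
  · -- Case 1 : a is eventually nonincreasing
    obtain ⟨N, hN⟩ := hcase
    have hbanti : Antitone (fun k => a (k + N)) := antitone_nat_of_succ_le fun k => by
      have h := hN (k + N) (Nat.le_add_left N k)
      have he : k + 1 + N = k + N + 1 := by omega
      rw [he]
      exact h
    set l : ℝ := ⨅ k, a (k + N) with hldef
    have hbdd : BddBelow (Set.range fun k => a (k + N)) :=
      ⟨0, by rintro r ⟨k, rfl⟩; exact hann _⟩
    have hbt : Tendsto (fun k => a (k + N)) atTop (nhds l) := tendsto_atTop_ciInf hbanti hbdd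
    have hat : Tendsto a atTop (nhds l) := (tendsto_add_atTop_iff_nat N).mp hbt
    have hge : ∀ n, N ≤ n → l ≤ a n := by
      intro n hn
      have h1 : l ≤ a (n - N + N) := ciInf_le hbdd (n - N)
      rwa [Nat.sub_add_cancel hn] at h1
    have hat1 : Tendsto (fun n => a (n + 1)) atTop (nhds l) :=
      (tendsto_add_atTop_iff_nat 1).mpr hat
    have hdiff : Tendsto (fun n => a n - a (n + 1)) atTop (nhds 0) := by
      have h := hat.sub hat1
      simpa using h
    have hc0 : Tendsto c atTop (nhds 0) := by
      have hgt : Tendsto (fun n => 2 * (β n * K + (a n - a (n + 1)))) atTop (nhds 0) := by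
        have h1 : Tendsto (fun n => β n * K + (a n - a (n + 1))) atTop (nhds 0) := by
          have h2 := (hβ0.mul_const K).add hdiff
          simpa using h2
        simpa using h1.const_mul 2
      refine squeeze_zero' (Eventually.of_forall fun n => hcnn n) ?_ hgt
      have hev : ∀ᶠ n in atTop, β n < 1/2 := hβ0.eventually_lt_const (by norm_num)
      refine hev.mono fun n hn => ?_
      have h3 := hIneqA n
      have h4 : 0 ≤ c n := hcnn n
      nlinarith [mul_nonneg (by linarith : (0:ℝ) ≤ 1/2 - β n) h4]
    have hxT0 : Tendsto (fun n => ‖x n - T (x n)‖) atTop (nhds 0) := by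
      refine tendsto_of_sq (fun n => norm_nonneg _) ?_
      refine squeeze_zero' (Eventually.of_forall fun n => sq_nonneg _) ?_
        (by simpa using hc0.const_mul (2/δ))
      refine hN0.mono fun n hn => ?_
      have h1 : δ/2 * ‖x n - T (x n)‖^2 ≤ c n :=
        mul_le_mul_of_nonneg_right hn.le (sq_nonneg _)
      have h2 : (2/δ) * (δ/2 * ‖x n - T (x n)‖^2) = ‖x n - T (x n)‖^2 := by
        field_simp
      nlinarith [mul_le_mul_of_nonneg_left h1 (by positivity : (0:ℝ) ≤ 2/δ)]
    have hSx0 : Tendsto (fun n => ‖x (n+1) - S (x (n+1))‖) atTop (nhds 0) := by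
      have h1 : Tendsto (fun n => ‖x (n+1) - T (x (n+1))‖) atTop (nhds 0) :=
        hxT0.comp (tendsto_add_atTop_nat 1)
      have h2 : Tendsto (fun n => lam * ‖x (n+1) - T (x (n+1))‖) atTop (nhds 0) := by
        simpa using h1.const_mul lam
      exact h2.congr fun n => (hxT (n+1)).symm
    have hsx : ∀ ε' > 0, ∀ᶠ n in atTop, s n < ε' := fun ε' hε' =>
      key_lemma C hCc hCv S hSnon' u z hproj (fun n => x (n+1)) (fun n => hxC (n+1))
        (R + ‖z‖) (fun n => hxbd (n+1)) hSx0 ε' hε'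
    have hl_le : l ≤ 0 := by
      by_contra hl
      push_neg at hl
      have hev := ((hsx (l/4) (by linarith)).and (eventually_ge_atTop N))
      obtain ⟨N1, hN1⟩ := eventually_atTop.mp hev
      have hstep : ∀ n, N1 ≤ n → β n * (l/2) ≤ a n - a (n + 1) := by
        intro n hn
        obtain ⟨hs1, hs2⟩ := hN1 n hn
        have hB := hIneqB n
        have hβn := hβ n
        have hge1 : l ≤ a n := hge n hs2
        nlinarith [hβn.1]
      have hsum : ∀ m, N1 ≤ m → (l/2) * (∑ i ∈ Finset.Ico N1 m, β i) ≤ a N1 - a m := by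
        intro m hm
        induction m, hm using Nat.le_induction with
        | base => simp
        | succ m hm ih =>
          rw [Finset.sum_Ico_succ_top hm]
          have h := hstep m hm
          ring_nf
          ring_nf at ih h
          linarith
      have hbig : ∀ᶠ m in atTop,
          (a N1) / (l/2) + (∑ i ∈ Finset.range N1, β i) < ∑ i ∈ Finset.range m, β i :=
        hβsum.eventually_gt_atTop _
      obtain ⟨m, hm⟩ := (hbig.and (eventually_ge_atTop N1)).exists
      have hIco : ∑ i ∈ Finset.Ico N1 m, β i
          = ∑ i ∈ Finset.range m, β i - ∑ i ∈ Finset.range N1, β i :=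
        Finset.sum_Ico_eq_sub _ hm.2
      have h5 := hsum m hm.2
      rw [hIco] at h5
      have hlt : a N1 / (l/2) < ∑ i ∈ Finset.range m, β i - ∑ i ∈ Finset.range N1, β i := by
        linarith [hm.1]
      have h7 := mul_lt_mul_of_pos_left hlt (show (0:ℝ) < l/2 by linarith)
      have h6 : (l/2) * (a N1 / (l/2)) = a N1 := by
        field_simp
      rw [h6] at h7
      linarith [hann m]
    have hl_eq : l = 0 := le_antisymm hl_le (le_ciInf fun k => hann _)
    rw [hl_eq] at hat
    exact hat.eventually_lt_const hε
  · -- Case 2 : a increases infinitely often (Maingé's argument)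
    push_neg at hcase
    obtain ⟨n0, hn0ge, hn0⟩ := hcase 0
    set τ : ℕ → ℕ := fun n => Nat.findGreatest (fun k => a k < a (k + 1)) n with hτdef
    have hτP : ∀ n, n0 ≤ n → a (τ n) < a (τ n + 1) := fun n hn =>
      Nat.findGreatest_spec (P := fun k => a k < a (k + 1)) hn hn0
    have hτle : ∀ n, τ n ≤ n := fun n => Nat.findGreatest_le n
    have hτtend : Tendsto τ atTop atTop := by
      rw [tendsto_atTop_atTop]
      intro b
      obtain ⟨m, hmb, hPm⟩ := hcase b
      exact ⟨m, fun n hn => hmb.trans (Nat.le_findGreatest hn hPm)⟩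
    have hfall : ∀ n, n0 ≤ n → a n ≤ a (τ n + 1) := by
      intro n hn
      rcases eq_or_lt_of_le (hτle n) with heq | hlt
      · have h' := hτP n hn
        rw [heq] at h'
        rw [heq]
        exact h'.le
      · have hchain : ∀ m, τ n + 1 ≤ m → m ≤ n → a m ≤ a (τ n + 1) := by
          intro m hm1
          induction m, hm1 using Nat.le_induction with
          | base => intro _; exact le_rfl
          | succ m hm ih =>
            intro hm2
            have hnP : ¬ (a m < a (m + 1)) :=
              Nat.findGreatest_is_greatest hm (by omega)
            exact (not_lt.mp hnP).trans (ih (by omega))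
        exact hchain n hlt le_rfl
    have hβτ : Tendsto (fun m => β (τ m)) atTop (nhds 0) := hβ0.comp hτtend
    have hcτ0 : Tendsto (fun m => c (τ m)) atTop (nhds 0) := by
      refine squeeze_zero' (Eventually.of_forall fun m => hcnn _) ?_
        (by simpa using hβτ.const_mul (2*K))
      filter_upwards [hβτ.eventually_lt_const (show (0:ℝ) < 1/2 by norm_num),
        eventually_ge_atTop n0] with m h1 h2
      have hA := hIneqA (τ m)
      have hPτ := hτP m h2
      have hc : 0 ≤ c (τ m) := hcnn (τ m)
      have hβm := hβ (τ m)
      nlinarith [hKnn, mul_nonneg (by linarith : (0:ℝ) ≤ 1/2 - β (τ m)) hc]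
    have hxTτ : Tendsto (fun m => ‖x (τ m) - T (x (τ m))‖) atTop (nhds 0) := by
      refine tendsto_of_sq (fun m => norm_nonneg _) ?_
      refine squeeze_zero' (Eventually.of_forall fun m => sq_nonneg _) ?_
        (by simpa using hcτ0.const_mul (2/δ))
      filter_upwards [hτtend.eventually hN0] with m hm
      have h1 : δ/2 * ‖x (τ m) - T (x (τ m))‖^2 ≤ c (τ m) :=
        mul_le_mul_of_nonneg_right hm.le (sq_nonneg _)
      have h2 : (2/δ) * (δ/2 * ‖x (τ m) - T (x (τ m))‖^2) = ‖x (τ m) - T (x (τ m))‖^2 := by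
        field_simp
      nlinarith [mul_le_mul_of_nonneg_left h1 (by positivity : (0:ℝ) ≤ 2/δ)]
    have hsxτ : ∀ᶠ m in atTop, (inner ℝ (u - z) (x (τ m) - z) : ℝ) < ε/4 := by
      have hSxτ : Tendsto (fun m => ‖x (τ m) - S (x (τ m))‖) atTop (nhds 0) := by
        have h2 : Tendsto (fun m => lam * ‖x (τ m) - T (x (τ m))‖) atTop (nhds 0) := by
          simpa using hxTτ.const_mul lam
        exact h2.congr fun m => (hxT (τ m)).symm
      exact key_lemma C hCc hCv S hSnon' u z hproj (fun m => x (τ m)) (fun m => hxC _)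
        (R + ‖z‖) (fun m => hxbd _) hSxτ (ε/4) (by linarith)
    have hdx : Tendsto (fun m => ‖x (τ m + 1) - x (τ m)‖) atTop (nhds 0) := by
      have hbd : ∀ n, ‖x (n + 1) - x n‖ ≤ β n * (‖u - z‖ + R) + 2 * ‖x n - T (x n)‖ := by
        intro n
        have hid : x (n + 1) - x n = β n • (u - y n) + α n • (T (x n) - x n) := by
          rw [hxrec n]; simp only [hydef]; module
        have h1 : ‖u - y n‖ ≤ ‖u - z‖ + R := by
          calc ‖u - y n‖ ≤ ‖u - z‖ + ‖z - y n‖ := norm_sub_le_norm_sub_add_norm_sub _ _ _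
            _ = ‖u - z‖ + ‖y n - z‖ := by rw [norm_sub_rev z]
            _ ≤ ‖u - z‖ + R := by linarith [hyz n, hR n]
        have h2 : ‖T (x n) - x n‖ = ‖x n - T (x n)‖ := norm_sub_rev _ _
        rw [hid]
        calc ‖β n • (u - y n) + α n • (T (x n) - x n)‖
            ≤ ‖β n • (u - y n)‖ + ‖α n • (T (x n) - x n)‖ := norm_add_le _ _
          _ = β n * ‖u - y n‖ + α n * ‖x n - T (x n)‖ := by
              rw [norm_smul, norm_smul, Real.norm_eq_abs, Real.norm_eq_abs,
                abs_of_nonneg (hβ n).1.le, abs_of_nonneg (hα n).1, h2]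
          _ ≤ β n * (‖u - z‖ + R) + 2 * ‖x n - T (x n)‖ := by
              nlinarith [norm_nonneg (x n - T (x n)), (hβ n).1, h1, hl1, (hα n).2,
                (hα n).1, norm_nonneg (u - y n)]
      refine squeeze_zero' (Eventually.of_forall fun m => norm_nonneg _)
        (Eventually.of_forall fun m => hbd (τ m)) ?_
      have h4 := (hβτ.mul_const (‖u - z‖ + R)).add (hxTτ.const_mul 2)
      simpa using h4
    have hsτ : ∀ᶠ m in atTop, s (τ m) < ε/2 := by
      have hev2 : ∀ᶠ m in atTop, ‖u - z‖ * ‖x (τ m + 1) - x (τ m)‖ < ε/4 := by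
        have h5 : Tendsto (fun m => ‖u - z‖ * ‖x (τ m + 1) - x (τ m)‖) atTop (nhds 0) := by
          simpa using hdx.const_mul ‖u - z‖
        exact h5.eventually_lt_const (by linarith)
      filter_upwards [hsxτ, hev2] with m h1 h2
      have hdecomp : s (τ m) = (inner ℝ (u - z) (x (τ m) - z) : ℝ)
          + (inner ℝ (u - z) (x (τ m + 1) - x (τ m)) : ℝ) := by
        simp only [hsdef]
        rw [← inner_add_right]
        congr 1
        abel
      have h3 : (inner ℝ (u - z) (x (τ m + 1) - x (τ m)) : ℝ)
          ≤ ‖u - z‖ * ‖x (τ m + 1) - x (τ m)‖ := real_inner_le_norm _ _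
      rw [hdecomp]
      linarith
    have hfinal : ∀ᶠ m in atTop, a (τ m + 1) < ε := by
      filter_upwards [hsτ, eventually_ge_atTop n0] with m h1 h2
      have hB := hIneqB (τ m)
      have hPτ : a (τ m) < a (τ m + 1) := hτP m h2
      have hβτm := hβ (τ m)
      have h3 : a (τ m) < 2 * s (τ m) := by nlinarith [hβτm.1]
      nlinarith [hann (τ m), hβτm.1, hβτm.2]
    filter_upwards [hfinal, eventually_ge_atTop n0] with n h1 h2
    exact lt_of_le_of_lt (hfall n h2) h1
end

section
/- Let C be a nonempty closed convex subset of a real Hilbert space, T : C → C a continuous pseudocontractive mapping with a fixed point, and {x_n} ⊂ C a bounded sequence with ‖x_n − T x_n‖ → 0. If z = lim_{t→0} x_t exists, where x_t = t u + (1 − t) T x_t for given u ∈ C, then limsup_{n→∞} ⟨u − z, x_n − z⟩ ≤ 0. -/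
theorem stmt_12 {H : Type*} [NormedAddCommGroup H] [InnerProductSpace ℝ H] [CompleteSpace H]
    (C : Set H) (hCne : C.Nonempty) (hCc : IsClosed C) (hCv : Convex ℝ C)
    (T : H → H) (hTC : ∀ x ∈ C, T x ∈ C) (hTcont : ContinuousOn T C)
    (hT : ∀ x ∈ C, ∀ y ∈ C, (inner ℝ (T x - T y) (x - y) : ℝ) ≤ ‖x - y‖ ^ 2)
    (hF : ∃ p ∈ C, T p = p) (u : H) (hu : u ∈ C)
    (x : ℕ → H) (hxC : ∀ n, x n ∈ C)
    (hbdd : Bornology.IsBounded (Set.range x))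
    (hfp : Filter.Tendsto (fun n => ‖x n - T (x n)‖) Filter.atTop (nhds 0))
    (xt : ℝ → H)
    (hxt : ∀ t ∈ Set.Ioo (0:ℝ) 1, xt t ∈ C ∧ xt t = t • u + (1 - t) • T (xt t))
    (z : H) (hz : Filter.Tendsto xt (nhdsWithin 0 (Set.Ioo (0:ℝ) 1)) (nhds z)) :
    Filter.limsup (fun n => (inner ℝ (u - z) (x n - z) : ℝ)) Filter.atTop ≤ 0 := by
  obtain ⟨R, hR⟩ := hbdd.exists_norm_le
  have hR' : ∀ n, ‖x n‖ ≤ R := fun n => hR _ (Set.mem_range_self n)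
  have hR0 : (0:ℝ) ≤ R := le_trans (norm_nonneg _) (hR' 0)
  -- key inequality for each t ∈ (0,1)
  have key : ∀ t ∈ Set.Ioo (0:ℝ) 1, ∀ n,
      (inner ℝ (u - xt t) (x n - xt t) : ℝ) ≤ ‖x n - T (x n)‖ * (‖xt t‖ + R) / t := by
    rintro t ⟨ht0, ht1⟩ n
    obtain ⟨hyC, hy⟩ := hxt t ⟨ht0, ht1⟩
    set y := xt t with hydef
    set a := x n with hadef
    have hq : ‖y - a‖ ≤ ‖y‖ + R := le_trans (norm_sub_le _ _) (by linarith [hR' n])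
    have hymem : y - a = t • (u - a) + (1 - t) • (T y - a) := by
      conv_lhs => rw [hy]
      module
    have e1 : (inner ℝ (y - a) (y - a) : ℝ)
        = t * inner ℝ (u - a) (y - a) + (1 - t) * inner ℝ (T y - a) (y - a) := by
      nth_rewrite 1 [hymem]
      rw [inner_add_left, real_inner_smul_left, real_inner_smul_left]
    rw [real_inner_self_eq_norm_sq] at e1
    have e2 : (inner ℝ (T y - a) (y - a) : ℝ)
        = inner ℝ (T y - T a) (y - a) + inner ℝ (T a - a) (y - a) := by
      rw [← inner_add_left, sub_add_sub_cancel]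
    have h3 : (inner ℝ (T y - T a) (y - a) : ℝ) ≤ ‖y - a‖ ^ 2 := hT y hyC a (hxC n)
    have h4 : (inner ℝ (T a - a) (y - a) : ℝ) ≤ ‖a - T a‖ * ‖y - a‖ := by
      calc (inner ℝ (T a - a) (y - a) : ℝ) ≤ ‖T a - a‖ * ‖y - a‖ := real_inner_le_norm _ _
        _ = ‖a - T a‖ * ‖y - a‖ := by rw [norm_sub_rev]
    have e3 : (inner ℝ (u - a) (y - a) : ℝ) = inner ℝ (u - y) (y - a) + ‖y - a‖ ^ 2 := by
      rw [← real_inner_self_eq_norm_sq, ← inner_add_left, sub_add_sub_cancel]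
    have e4 : (inner ℝ (u - y) (a - y) : ℝ) = - inner ℝ (u - y) (y - a) := by
      rw [← neg_sub y a, inner_neg_right]
    rw [e4, le_div_iff₀ ht0]
    have Dnn : (0:ℝ) ≤ ‖a - T a‖ := norm_nonneg _
    have qnn : (0:ℝ) ≤ ‖y - a‖ := norm_nonneg _
    nlinarith [mul_nonneg (mul_nonneg ht0.le Dnn) qnn,
      mul_nonneg Dnn (sub_nonneg.2 hq), mul_nonneg (sub_nonneg.2 ht1.le) (mul_nonneg Dnn qnn)]
  set f : ℕ → ℝ := fun n => (inner ℝ (u - z) (x n - z) : ℝ) with hf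
  have hxz : ∀ n, ‖x n - z‖ ≤ R + ‖z‖ := fun n =>
    le_trans (norm_sub_le _ _) (by linarith [hR' n])
  have hlb : ∀ n, -(‖u - z‖ * (R + ‖z‖)) ≤ f n := by
    intro n
    have h1 : |f n| ≤ ‖u - z‖ * ‖x n - z‖ := abs_real_inner_le_norm _ _
    have h2 := hxz n
    have h3 := neg_abs_le (f n)
    nlinarith [norm_nonneg (u - z), norm_nonneg (x n - z)]
  have hbblo : Filter.IsBoundedUnder (· ≥ ·) Filter.atTop f :=
    Filter.isBoundedUnder_of ⟨-(‖u - z‖ * (R + ‖z‖)), fun n => hlb n⟩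
  have hcb : Filter.IsCoboundedUnder (· ≤ ·) Filter.atTop f :=
    hbblo.isCoboundedUnder_le
  have main : ∀ ε : ℝ, 0 < ε → Filter.limsup f Filter.atTop ≤ 0 + ε := by
    intro ε hε
    rw [zero_add]
    set K : ℝ := ‖u - z‖ + 1 + (R + ‖z‖) with hK
    have hK1 : (1:ℝ) ≤ K := by
      have := norm_nonneg (u - z); have := norm_nonneg z; simp only [hK]; linarith
    have hK0 : (0:ℝ) < K := lt_of_lt_of_le one_pos hK1
    have hδ : (0:ℝ) < min 1 (ε / (2 * K)) := lt_min one_pos (by positivity)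
    have hne : (nhdsWithin (0:ℝ) (Set.Ioo 0 1)).NeBot := by
      rw [← mem_closure_iff_nhdsWithin_neBot, closure_Ioo zero_ne_one]
      exact Set.left_mem_Icc.2 zero_le_one
    obtain ⟨t, hball, htI⟩ :=
      ((hz.eventually (Metric.ball_mem_nhds z hδ)).and eventually_mem_nhdsWithin).exists
    obtain ⟨ht0, ht1⟩ := htI
    set y := xt t with hydef
    have hyz : ‖y - z‖ < min 1 (ε / (2 * K)) := by
      simpa [Metric.mem_ball, dist_eq_norm] using hball
    have hyz1 : ‖y - z‖ < 1 := lt_of_lt_of_le hyz (min_le_left _ _)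
    have hyz2 : ‖y - z‖ < ε / (2 * K) := lt_of_lt_of_le hyz (min_le_right _ _)
    have hKA : K * ‖y - z‖ ≤ ε / 2 := by
      have := mul_le_mul_of_nonneg_left hyz2.le hK0.le
      calc K * ‖y - z‖ ≤ K * (ε / (2 * K)) := this
        _ = ε / 2 := by field_simp
    -- decomposition bound
    have dec : ∀ n, f n ≤ (inner ℝ (u - y) (x n - y) : ℝ) + K * ‖y - z‖ := by
      intro n
      have hdec : f n = (inner ℝ (u - y) (x n - y) : ℝ) + inner ℝ (u - y) (y - z)
          + inner ℝ (y - z) (x n - z) := by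
        have h1 : u - z = (u - y) + (y - z) := by abel
        have h2 : x n - z = (x n - y) + (y - z) := by abel
        simp only [hf]
        rw [h1, h2]
        simp only [inner_add_left, inner_add_right]
        ring
      have b1 : (inner ℝ (u - y) (y - z) : ℝ) ≤ (‖u - z‖ + 1) * ‖y - z‖ := by
        have h := real_inner_le_norm (u - y) (y - z)
        have huy : ‖u - y‖ ≤ ‖u - z‖ + 1 := by
          calc ‖u - y‖ = ‖(u - z) + (z - y)‖ := by rw [sub_add_sub_cancel]
            _ ≤ ‖u - z‖ + ‖z - y‖ := norm_add_le _ _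
            _ ≤ ‖u - z‖ + 1 := by rw [norm_sub_rev z y]; linarith
        nlinarith [norm_nonneg (y - z)]
      have b2 : (inner ℝ (y - z) (x n - z) : ℝ) ≤ ‖y - z‖ * (R + ‖z‖) := by
        have h := real_inner_le_norm (y - z) (x n - z)
        nlinarith [norm_nonneg (y - z), hxz n, norm_nonneg (x n - z)]
      rw [hdec]
      have : (‖u - z‖ + 1) * ‖y - z‖ + ‖y - z‖ * (R + ‖z‖) = K * ‖y - z‖ := by
        simp only [hK]; ring
      linarith
    -- eventual bound from hfp
    set c : ℝ := ε * t / (2 * (‖y‖ + R + 1)) with hc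
    have hyR1 : (0:ℝ) < ‖y‖ + R + 1 := by positivity
    have hc0 : 0 < c := by positivity
    have hev : ∀ᶠ n in Filter.atTop, ‖x n - T (x n)‖ < c := by
      have := hfp.eventually (gt_mem_nhds hc0)
      simpa using this
    have hfinal : ∀ᶠ n in Filter.atTop, f n ≤ ε := by
      filter_upwards [hev] with n hn
      have hkey := key t ⟨ht0, ht1⟩ n
      rw [← hydef] at hkey
      have hstep : ‖x n - T (x n)‖ * (‖y‖ + R) / t ≤ ε / 2 := by
        rw [div_le_iff₀ ht0]
        have h1 : ‖x n - T (x n)‖ * (‖y‖ + R) ≤ c * (‖y‖ + R + 1) := by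
          have := norm_nonneg (x n - T (x n))
          nlinarith [norm_nonneg y]
        have h2 : c * (‖y‖ + R + 1) = ε / 2 * t := by
          simp only [hc]; field_simp
        linarith
      calc f n ≤ (inner ℝ (u - y) (x n - y) : ℝ) + K * ‖y - z‖ := dec n
        _ ≤ ε / 2 + ε / 2 := add_le_add (le_trans hkey hstep) hKA
        _ = ε := by ring
    exact Filter.limsup_le_of_le hcb hfinal
  exact le_of_forall_pos_le_add main
end
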